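/- arXiv:1802.08318 — 5 statements merged into one kernel-verified Lean document; each statement's English description precedes it below -/
import Mathlib

section
/- Let k = d and x ∈ [0,1]ⁿ with Σᵢ xᵢ = k. Let μ be the distribution on k-element subsets of [n] with μ(S) proportional to ∏_{i∈S} xᵢ. Then for any T ⊆ [n] with |T| = d−1 and R ⊆ [n] with |R| = d, Pr_{S∼μ}[T ⊆ S] / Pr_{S∼μ}[R ⊆ S] ≤ d · (∏_{i∈T} xᵢ)/(∏_{i∈R} xᵢ). -/
open Finset

/-- For `k = d` and `x ∈ [0,1]ⁿ` with `Σᵢ xᵢ = d`, the hard-core distribution `μ`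
on `d`-element subsets of `[n]` with `μ(S) ∝ ∏_{i∈S} xᵢ` is `d`-approximate
`(d-1,d)`-wise independent: for `|T| = d-1`, `|R| = d`,
`Pr[T ⊆ S] / Pr[R ⊆ S] ≤ d · x^T / x^R`. -/
theorem hardcore_d_approx_independent {n d : ℕ} (hd : 0 < d) (hdn : d ≤ n)
    (x : Fin n → ℝ) (hx : ∀ i, 0 ≤ x i ∧ x i ≤ 1) (hsum : ∑ i, x i = d)
    (hsupp : d ≤ ((Finset.univ : Finset (Fin n)).filter (fun i => x i ≠ 0)).card)
    (T R : Finset (Fin n)) (hT : T.card = d - 1) (hR : R.card = d)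
    (hRpos : 0 < ∏ i ∈ R, x i) :
    ((∑ S ∈ (Finset.powersetCard d (Finset.univ : Finset (Fin n))).filter
          (fun S => T ⊆ S), ∏ i ∈ S, x i) /
        (∑ S ∈ Finset.powersetCard d (Finset.univ : Finset (Fin n)), ∏ i ∈ S, x i)) /
      ((∑ S ∈ (Finset.powersetCard d (Finset.univ : Finset (Fin n))).filter
          (fun S => R ⊆ S), ∏ i ∈ S, x i) /
        (∑ S ∈ Finset.powersetCard d (Finset.univ : Finset (Fin n)), ∏ i ∈ S, x i))
      ≤ (d : ℝ) * ((∏ i ∈ T, x i) / (∏ i ∈ R, x i)) := by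
  have hRmem : R ∈ Finset.powersetCard d (Finset.univ : Finset (Fin n)) := by
    simp [Finset.mem_powersetCard, hR]
  have hterm : ∀ S ∈ Finset.powersetCard d (Finset.univ : Finset (Fin n)),
      (0:ℝ) ≤ ∏ i ∈ S, x i := fun S _ => Finset.prod_nonneg fun i _ => (hx i).1
  have hZpos : 0 < ∑ S ∈ Finset.powersetCard d (Finset.univ : Finset (Fin n)), ∏ i ∈ S, x i :=
    lt_of_lt_of_le hRpos (Finset.single_le_sum hterm hRmem)
  have hB : (∑ S ∈ (Finset.powersetCard d (Finset.univ : Finset (Fin n))).filter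
      (fun S => R ⊆ S), ∏ i ∈ S, x i) = ∏ i ∈ R, x i := by
    have hfil : (Finset.powersetCard d (Finset.univ : Finset (Fin n))).filter
        (fun S => R ⊆ S) = {R} := by
      ext S
      simp only [Finset.mem_filter, Finset.mem_powersetCard, Finset.mem_singleton]
      constructor
      · rintro ⟨⟨-, hcard⟩, hRS⟩
        exact (Finset.eq_of_subset_of_card_le hRS (by rw [hcard, hR])).symm
      · rintro rfl; exact ⟨⟨Finset.subset_univ _, hR⟩, Finset.Subset.refl _⟩
    rw [hfil, Finset.sum_singleton]
  have hA : (∑ S ∈ (Finset.powersetCard d (Finset.univ : Finset (Fin n))).filter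
      (fun S => T ⊆ S), ∏ i ∈ S, x i) = ∑ a ∈ Tᶜ, x a * ∏ j ∈ T, x j := by
    refine (Finset.sum_bij (fun a _ => insert a T) ?_ ?_ ?_ ?_).symm
    · intro a ha
      have haT : a ∉ T := by simpa using ha
      simp only [Finset.mem_filter, Finset.mem_powersetCard]
      refine ⟨⟨Finset.subset_univ _, ?_⟩, Finset.subset_insert _ _⟩
      rw [Finset.card_insert_of_notMem haT, hT]
      omega
    · intro a ha b hb hab
      have haT : a ∉ T := by simpa using ha
      have hab' : insert a T = insert b T := hab
      have : a ∈ insert b T := hab' ▸ Finset.mem_insert_self a T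
      rcases Finset.mem_insert.mp this with h | h
      · exact h
      · exact absurd h haT
    · intro S hS
      simp only [Finset.mem_filter, Finset.mem_powersetCard] at hS
      obtain ⟨⟨-, hcard⟩, hTS⟩ := hS
      have hcardTS : (S \ T).card = 1 := by
        rw [Finset.card_sdiff_of_subset hTS, hcard, hT]; omega
      obtain ⟨a, haeq⟩ := Finset.card_eq_one.mp hcardTS
      have haT : a ∉ T := by
        have : a ∈ S \ T := haeq ▸ Finset.mem_singleton_self a
        exact (Finset.mem_sdiff.mp this).2
      refine ⟨a, by simpa using haT, ?_⟩
      apply Finset.Subset.antisymm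
      · intro b hb
        rcases Finset.mem_insert.mp hb with h | h
        · subst h
          have : b ∈ S \ T := haeq ▸ Finset.mem_singleton_self b
          exact (Finset.mem_sdiff.mp this).1
        · exact hTS h
      · intro b hb
        by_cases hbT : b ∈ T
        · exact Finset.mem_insert_of_mem hbT
        · have : b ∈ S \ T := Finset.mem_sdiff.mpr ⟨hb, hbT⟩
          rw [haeq, Finset.mem_singleton] at this
          subst this
          exact Finset.mem_insert_self _ _
    · intro a ha
      have haT : a ∉ T := by simpa using ha
      rw [Finset.prod_insert haT]
  have hTnn : (0:ℝ) ≤ ∏ j ∈ T, x j := Finset.prod_nonneg fun i _ => (hx i).1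
  have hAle : (∑ a ∈ Tᶜ, x a * ∏ j ∈ T, x j) ≤ (d : ℝ) * ∏ j ∈ T, x j := by
    rw [← Finset.sum_mul]
    apply mul_le_mul_of_nonneg_right _ hTnn
    calc ∑ a ∈ Tᶜ, x a ≤ ∑ a, x a :=
          Finset.sum_le_sum_of_subset_of_nonneg (Finset.subset_univ _)
            (fun i _ _ => (hx i).1)
      _ = d := hsum
  rw [hB, div_div_div_comm, div_self hZpos.ne', div_one]
  rw [hA]
  rw [div_le_iff₀ hRpos, mul_assoc, div_mul_cancel₀ _ hRpos.ne']
  exact hAle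
end

section
/- Let 0 ≤ l' < l ≤ d ≤ k ≤ qk be integers and let μ be the uniform distribution on k-subsets of a ground set of size qk. For any subsets T' and T of sizes l' and l respectively, (Pr[S ⊇ T']/Pr[S ⊇ T]) · q^{l'−l} ≤ (k/(k−l+1))^{l−l'}. -/
open Finset

lemma card_superset_aux {α : Type*} [Fintype α] [DecidableEq α] (k : ℕ) (A : Finset α)
    (hA : A.card ≤ k) :
    ((Finset.powersetCard k (Finset.univ : Finset α)).filter (fun S => A ⊆ S)).card =
      Nat.choose (Fintype.card α - A.card) (k - A.card) := by
  have hpc := Finset.card_powersetCard (k - A.card) ((Finset.univ : Finset α) \ A)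
  rw [card_sdiff_of_subset (subset_univ A), card_univ] at hpc
  rw [← hpc]
  · apply Finset.card_bij' (fun S _ => S \ A) (fun U _ => U ∪ A)
    · intro S hS
      simp only [mem_filter, mem_powersetCard] at hS
      rw [mem_powersetCard]
      refine ⟨fun x hx => ?_, ?_⟩
      · simp only [mem_sdiff] at hx ⊢
        exact ⟨mem_univ x, hx.2⟩
      · rw [card_sdiff_of_subset hS.2, hS.1.2]
    · intro U hU
      rw [mem_powersetCard] at hU
      simp only [mem_filter, mem_powersetCard]
      have hdisj : Disjoint U A := by
        refine disjoint_left.mpr fun x hx => ?_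
        have := hU.1 hx
        simp only [mem_sdiff] at this
        exact this.2
      refine ⟨⟨subset_univ _, ?_⟩, subset_union_right⟩
      rw [card_union_of_disjoint hdisj, hU.2]
      omega
    · intro S hS
      simp only [mem_filter] at hS
      exact sdiff_union_of_subset hS.2
    · intro U hU
      rw [mem_powersetCard] at hU
      have hdisj : Disjoint U A := by
        refine disjoint_left.mpr fun x hx => ?_
        have := hU.1 hx
        simp only [mem_sdiff] at this
        exact this.2
      exact union_sdiff_cancel_right hdisj

lemma choose_ratio_bound (n k l : ℕ) (hl : l ≤ k) (hk : k ≤ n) :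
    ∀ m : ℕ, m ≤ l →
    (Nat.choose (n - (l - m)) (k - (l - m)) : ℝ) ≤
      ((n : ℝ) / ((k : ℝ) - l + 1)) ^ m * Nat.choose (n - l) (k - l) := by
  have hpos : (0:ℝ) < (k : ℝ) - l + 1 := by
    have : (l : ℝ) ≤ k := by exact_mod_cast hl
    linarith
  intro m
  induction m with
  | zero => intro _; simp
  | succ m ih =>
    intro hm
    have hml : m ≤ l := by omega
    set j := l - m - 1 with hj
    have hjl : j < l := by omega
    have hjk : j < k := by omega
    have hlm1 : l - (m + 1) = j := by omega
    have key := Nat.add_one_mul_choose_eq (n - j - 1) (k - j - 1)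
    have h1 : n - j - 1 + 1 = n - j := by omega
    have h2 : k - j - 1 + 1 = k - j := by omega
    rw [h1, h2] at key
    have hnj1 : n - j - 1 = n - (l - m) := by omega
    have hkj1 : k - j - 1 = k - (l - m) := by omega
    rw [hnj1, hkj1] at key
    have hkjpos : (0:ℝ) < (k : ℝ) - j := by
      have : (j:ℝ) < k := by exact_mod_cast hjk
      linarith
    have hcast : (Nat.choose (n - j) (k - j) : ℝ) =
        ((n:ℝ) - j) / ((k:ℝ) - j) * Nat.choose (n - (l - m)) (k - (l - m)) := by
      rw [div_mul_eq_mul_div, eq_div_iff (ne_of_gt hkjpos)]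
      have hjn : j ≤ n := by omega
      have := congrArg (fun x : ℕ => (x : ℝ)) key
      push_cast [Nat.cast_sub hjn, Nat.cast_sub (le_of_lt hjk)] at this ⊢
      linarith [this]
    rw [hlm1, hcast]
    have hfrac : ((n:ℝ) - j) / ((k:ℝ) - j) ≤ (n:ℝ) / ((k:ℝ) - l + 1) := by
      apply div_le_div₀ (by positivity)
      · have : (0:ℝ) ≤ (j:ℝ) := by positivity
        linarith
      · exact hpos
      · have : (l : ℝ) ≤ (j:ℝ) + 1 + ((l:ℝ) - j - 1) := by ring_nf; linarith
        have hjlr : (j:ℝ) ≤ (l:ℝ) - 1 := by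
          have : (j:ℝ) + 1 ≤ l := by exact_mod_cast hjl
          linarith
        linarith
    calc ((n:ℝ) - j) / ((k:ℝ) - j) * Nat.choose (n - (l - m)) (k - (l - m))
        ≤ (n:ℝ) / ((k:ℝ) - l + 1) * ((((n : ℝ) / ((k : ℝ) - l + 1)) ^ m) *
              Nat.choose (n - l) (k - l)) := by
          apply mul_le_mul hfrac (ih hml) (by positivity) (by positivity)
      _ = ((n : ℝ) / ((k : ℝ) - l + 1)) ^ (m + 1) * Nat.choose (n - l) (k - l) := by ring

/-- The probability, under the uniform distribution on `k`-subsets of a ground set of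
size `q*k`, that the sample contains a fixed subset `A`. -/
noncomputable def uniformPr (q k : ℕ) (A : Finset (Fin (q * k))) : ℝ :=
  (((Finset.powersetCard k (Finset.univ : Finset (Fin (q * k)))).filter
      (fun S => A ⊆ S)).card : ℝ) / (Nat.choose (q * k) k : ℝ)

/-- For integers `0 ≤ l' < l ≤ d ≤ k` and the uniform distribution on `k`-subsets of a
ground set of size `qk`: for subsets `T'`, `T` of sizes `l'` and `l`,
`(Pr[S ⊇ T'] / Pr[S ⊇ T]) · q^{l'-l} ≤ (k/(k-l+1))^{l-l'}`. -/
theorem uniform_ratio_gen (q k d l l' : ℕ) (hq : 1 ≤ q) (hl' : l' < l) (hl : l ≤ d)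
    (hdk : d ≤ k)
    (T' T : Finset (Fin (q * k))) (hT' : T'.card = l') (hT : T.card = l) :
    (uniformPr q k T' / uniformPr q k T) / (q : ℝ) ^ (l - l') ≤
      ((k : ℝ) / ((k : ℝ) - l + 1)) ^ (l - l') := by
  have hlk : l ≤ k := le_trans hl hdk
  have hl'k : l' ≤ k := by omega
  have hn : k ≤ q * k := Nat.le_mul_of_pos_left k hq
  have hcard : Fintype.card (Fin (q * k)) = q * k := Fintype.card_fin _
  have hA : (uniformPr q k T' : ℝ) =
      (Nat.choose (q * k - l') (k - l') : ℝ) / (Nat.choose (q * k) k : ℝ) := by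
    unfold uniformPr
    rw [card_superset_aux k T' (by omega), hcard, hT']
  have hB : (uniformPr q k T : ℝ) =
      (Nat.choose (q * k - l) (k - l) : ℝ) / (Nat.choose (q * k) k : ℝ) := by
    unfold uniformPr
    rw [card_superset_aux k T (by omega), hcard, hT]
  have hC0 : (0:ℝ) < (Nat.choose (q * k) k : ℝ) := by
    exact_mod_cast Nat.choose_pos hn
  have hB0 : (0:ℝ) < (Nat.choose (q * k - l) (k - l) : ℝ) := by
    exact_mod_cast Nat.choose_pos (by omega)
  have hratio : uniformPr q k T' / uniformPr q k T =
      (Nat.choose (q * k - l') (k - l') : ℝ) / (Nat.choose (q * k - l) (k - l) : ℝ) := by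
    rw [hA, hB]
    field_simp
  -- key bound with m = l - l'
  have hkey := choose_ratio_bound (q * k) k l hlk hn (l - l') (by omega)
  have hll' : l - (l - l') = l' := by omega
  rw [hll'] at hkey
  have hpos : (0:ℝ) < (k : ℝ) - l + 1 := by
    have : (l : ℝ) ≤ k := by exact_mod_cast hlk
    linarith
  have hq0 : (0:ℝ) < q := by exact_mod_cast hq
  have hsplit : ((q * k : ℕ) : ℝ) / ((k : ℝ) - l + 1) =
      (q : ℝ) * ((k : ℝ) / ((k : ℝ) - l + 1)) := by
    push_cast; ring
  rw [hratio, div_div, div_le_iff₀ (by positivity)]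
  calc (Nat.choose (q * k - l') (k - l') : ℝ)
      ≤ (((q * k : ℕ) : ℝ) / ((k : ℝ) - l + 1)) ^ (l - l') *
          Nat.choose (q * k - l) (k - l) := hkey
    _ = ((k : ℝ) / ((k : ℝ) - l + 1)) ^ (l - l') *
          ((Nat.choose (q * k - l) (k - l) : ℝ) * (q : ℝ) ^ (l - l')) := by
        rw [hsplit, mul_pow]; ring
end

section
/- Let S be the edge set of a disjoint union of d/3 triangles on vertex set [d] (3 | d), and let V_S be the d×d unsigned incidence matrix whose columns are the vectors v_e with +1 at both endpoints of e. Then V_S is invertible and tr((V_S V_Sᵀ)⁻¹) = 3d/4. -/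
open Finset Matrix

noncomputable def Bm (a b : Fin 3) : ℝ :=
  ((if a = b then 1 else 0) - (if a = b + 1 then 1 else 0) + (if a = b + 2 then 1 else 0)) / 2

lemma AB_lemma (a b : Fin 3) :
    (∑ p : Fin 3, ((if a = p then (1 : ℝ) else 0) + (if a = p + 1 then 1 else 0)) * Bm p b)
      = if a = b then 1 else 0 := by
  fin_cases a <;> fin_cases b <;> simp [Bm, Fin.sum_univ_three] <;> norm_num

lemma Bsq_lemma : ∑ p : Fin 3, ∑ q : Fin 3, (Bm q p) * (Bm q p) = 9 / 4 := by
  simp [Bm, Fin.sum_univ_three]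
  norm_num

/-- Let `S` be the edge set of a disjoint union of `d/3` triangles on vertex set `[d]`
(`3 ∣ d`, encoded by a bijection `φ : Fin m × Fin 3 ≃ Fin d` with `d = 3m`; the edge
indexed by a vertex `c` joins `c` to the next vertex of its triangle). Then the
unsigned incidence matrix `V` is invertible and `tr((V Vᵀ)⁻¹) = 3d/4`. -/
theorem triangles_trace_inverse (m : ℕ) (hm : 0 < m) (d : ℕ) (hd : d = 3 * m)
    (φ : Fin m × Fin 3 ≃ Fin d) (V : Matrix (Fin d) (Fin d) ℝ)
    (hV : V = Matrix.of fun i c =>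
      (if i = c then (1 : ℝ) else 0) +
        (if i = φ ((φ.symm c).1, (φ.symm c).2 + 1) then 1 else 0)) :
    IsUnit V.det ∧ Matrix.trace ((V * Vᵀ)⁻¹) = 3 * (d : ℝ) / 4 := by
  set W : Matrix (Fin d) (Fin d) ℝ := Matrix.of fun i c =>
    if (φ.symm i).1 = (φ.symm c).1 then Bm (φ.symm i).2 (φ.symm c).2 else 0 with hW
  have hVφ : ∀ (i : Fin d) (t : Fin m) (p : Fin 3),
      V i (φ (t, p)) = (if (φ.symm i).1 = t then 1 else 0) *
        ((if (φ.symm i).2 = p then (1 : ℝ) else 0) + (if (φ.symm i).2 = p + 1 then 1 else 0)) := by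
    intro i t p
    have h1 : i = φ (t, p) ↔ ((φ.symm i).1 = t ∧ (φ.symm i).2 = p) := by
      rw [← Equiv.symm_apply_eq, Prod.ext_iff]
    have h2 : i = φ (t, p + 1) ↔ ((φ.symm i).1 = t ∧ (φ.symm i).2 = p + 1) := by
      rw [← Equiv.symm_apply_eq, Prod.ext_iff]
    simp only [hV, Matrix.of_apply, Equiv.symm_apply_apply, h1, h2]
    by_cases ht : (φ.symm i).1 = t <;> by_cases hp1 : (φ.symm i).2 = p <;>
      by_cases hp2 : (φ.symm i).2 = p + 1 <;> simp [ht, hp1, hp2] <;> ring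
  have hVW : V * W = 1 := by
    ext i j
    rw [Matrix.mul_apply, ← Equiv.sum_comp φ (fun c => V i c * W c j)]
    rw [Fintype.sum_prod_type]
    have key : ∀ (t : Fin m) (p : Fin 3),
        V i (φ (t, p)) * W (φ (t, p)) j =
          (if (φ.symm i).1 = t then 1 else 0) * (if t = (φ.symm j).1 then 1 else 0) *
            (((if (φ.symm i).2 = p then (1 : ℝ) else 0) + (if (φ.symm i).2 = p + 1 then 1 else 0))
              * Bm p (φ.symm j).2) := by
      intro t p
      rw [hVφ]
      simp only [hW, Matrix.of_apply, Equiv.symm_apply_apply]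
      by_cases h : t = (φ.symm j).1 <;> simp [h] <;> ring
    simp_rw [key]
    rw [show (∑ t : Fin m, ∑ p : Fin 3,
        (if (φ.symm i).1 = t then (1:ℝ) else 0) * (if t = (φ.symm j).1 then 1 else 0) *
          (((if (φ.symm i).2 = p then (1 : ℝ) else 0) + (if (φ.symm i).2 = p + 1 then 1 else 0))
            * Bm p (φ.symm j).2)) =
      ∑ t : Fin m,
        (if (φ.symm i).1 = t then (1:ℝ) else 0) * (if t = (φ.symm j).1 then 1 else 0) *
          (if (φ.symm i).2 = (φ.symm j).2 then 1 else 0) from ?_]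
    · rw [Matrix.one_apply]
      by_cases hij : i = j
      · subst hij
        simp [Finset.sum_ite_eq' Finset.univ (φ.symm i).1]
      · have : ¬((φ.symm i).1 = (φ.symm j).1 ∧ (φ.symm i).2 = (φ.symm j).2) := by
          intro ⟨h1, h2⟩
          exact hij (φ.symm.injective (Prod.ext h1 h2))
        by_cases h1 : (φ.symm i).1 = (φ.symm j).1
        · have h2 : (φ.symm i).2 ≠ (φ.symm j).2 := fun h => this ⟨h1, h⟩
          simp [hij, h2]
        · simp only [hij, if_neg hij]
          apply Finset.sum_eq_zero
          intro t _
          by_cases ht : (φ.symm i).1 = t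
          · subst ht; simp [h1]
          · simp [ht]
    · apply Finset.sum_congr rfl
      intro t _
      rw [← Finset.mul_sum, AB_lemma]
  have hWV : W * V = 1 := mul_eq_one_comm.mp hVW
  constructor
  · exact IsUnit.of_mul_eq_one (a := V.det) W.det (by rw [← Matrix.det_mul, hVW, Matrix.det_one])
  · have h1 : (V * Vᵀ) * (Wᵀ * W) = 1 := by
      have hT : Vᵀ * Wᵀ = 1 := by rw [← Matrix.transpose_mul, hWV, Matrix.transpose_one]
      calc V * Vᵀ * (Wᵀ * W) = V * (Vᵀ * Wᵀ) * W := by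
            rw [Matrix.mul_assoc, Matrix.mul_assoc, Matrix.mul_assoc]
        _ = V * W := by rw [hT, Matrix.mul_one]
        _ = 1 := hVW
    rw [Matrix.inv_eq_right_inv h1]
    have htr : Matrix.trace (Wᵀ * W) = ∑ j : Fin d, ∑ c : Fin d, W c j * W c j := by
      simp [Matrix.trace, Matrix.mul_apply, Matrix.diag]
    rw [htr]
    rw [← Equiv.sum_comp φ (fun j => ∑ c : Fin d, W c j * W c j)]
    have hc : ∀ x : Fin m × Fin 3,
        (∑ c : Fin d, W c (φ x) * W c (φ x)) =
          ∑ y : Fin m × Fin 3, W (φ y) (φ x) * W (φ y) (φ x) :=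
      fun x => (Equiv.sum_comp φ _).symm
    simp_rw [hc]
    have hWφ : ∀ (y x : Fin m × Fin 3),
        W (φ y) (φ x) * W (φ y) (φ x) =
          if y.1 = x.1 then Bm y.2 x.2 * Bm y.2 x.2 else 0 := by
      intro y x
      simp only [hW, Matrix.of_apply, Equiv.symm_apply_apply]
      by_cases h : y.1 = x.1 <;> simp [h]
    simp_rw [hWφ]
    have : (∑ x : Fin m × Fin 3, ∑ y : Fin m × Fin 3,
        if y.1 = x.1 then Bm y.2 x.2 * Bm y.2 x.2 else 0) = m * (9 / 4) := by
      rw [Fintype.sum_prod_type]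
      have : ∀ t : Fin m, (∑ p : Fin 3, ∑ y : Fin m × Fin 3,
          if y.1 = t then Bm y.2 p * Bm y.2 p else 0) = 9 / 4 := by
        intro t
        have : ∀ p : Fin 3, (∑ y : Fin m × Fin 3,
            if y.1 = t then Bm y.2 p * Bm y.2 p else 0) = ∑ q : Fin 3, Bm q p * Bm q p := by
          intro p
          rw [Fintype.sum_prod_type, Finset.sum_comm]
          apply Finset.sum_congr rfl
          intro q _
          simp [Finset.sum_ite_eq' Finset.univ t]
        simp_rw [this]
        exact Bsq_lemma
      simp_rw [this]
      simp [mul_comm]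
    rw [this, hd]
    push_cast
    ring
end

section
/- Let G = ([d], S) with |S| = d have invertible incidence matrix V_S, and suppose t of its connected components are triangles. Then tr((V_S V_Sᵀ)⁻¹) ≥ d − 3t/4. -/
open Finset Matrix

attribute [local instance] Classical.propDecidable

namespace TrIneq

variable {α : Type*} [Fintype α] [DecidableEq α]

abbrev GG (S : Finset (Sym2 α)) : SimpleGraph α := SimpleGraph.fromEdgeSet (↑S)

noncomputable def Kv (S : Finset (Sym2 α)) (x : α) : Finset α :=
  Finset.univ.filter fun y => (GG S).Reachable x y

noncomputable def Ke (S : Finset (Sym2 α)) (x : α) : Finset (Sym2 α) :=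
  S.filter fun f => ∀ u ∈ f, (GG S).Reachable x u

def P (S : Finset (Sym2 α)) (x : α) : Prop := (Kv S x).card = 3 ∧ (Ke S x).card = 3

noncomputable def T (S : Finset (Sym2 α)) : ℕ := (Finset.univ.filter (P S)).card

noncomputable def es (w : α → ℝ) (f : Sym2 α) : ℝ := ∑ j ∈ Finset.univ.filter (· ∈ f), w j

noncomputable def deg (S : Finset (Sym2 α)) (x : α) : ℕ := (S.filter fun f => x ∈ f).card

structure Sys (A : Finset α) (S : Finset (Sym2 α)) (B : Sym2 α → α → ℝ) : Prop where
  nd : ∀ f ∈ S, ¬ f.IsDiag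
  endp : ∀ f ∈ S, ∀ x ∈ f, x ∈ A
  cardeq : S.card = A.card
  row : ∀ f ∈ S, ∀ g ∈ S, es (B f) g = if f = g then 1 else 0
  col : ∀ j ∈ A, ∀ i : α, (∑ f ∈ S.filter fun f => j ∈ f, B f i) = if j = i then 1 else 0
  supp : ∀ f ∈ S, ∀ i, i ∉ A → B f i = 0

lemma exists_pair {f : Sym2 α} (h : ¬ f.IsDiag) : ∃ p q, p ≠ q ∧ f = s(p, q) := by
  induction f using Sym2.ind with
  | _ p q => exact ⟨p, q, fun hpq => h (by simp [hpq]), rfl⟩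

lemma filter_mem_pair {p q : α} (hpq : p ≠ q) :
    (Finset.univ.filter (· ∈ s(p, q))) = ({p, q} : Finset α) := by
  ext j; simp [Sym2.mem_iff]

lemma es_pair (w : α → ℝ) {p q : α} (hpq : p ≠ q) : es w s(p, q) = w p + w q := by
  rw [es, filter_mem_pair hpq, Finset.sum_pair hpq]

lemma adj_of_mem {S : Finset (Sym2 α)} {p q : α} (h : s(p, q) ∈ S) (hpq : p ≠ q) :
    (GG S).Adj p q := by
  rw [SimpleGraph.fromEdgeSet_adj]; exact ⟨by simpa using h, hpq⟩

lemma isolated_of_notMem {A : Finset α} {S : Finset (Sym2 α)}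
    (hendp : ∀ f ∈ S, ∀ x ∈ f, x ∈ A) {x : α} (hx : x ∉ A) {y : α}
    (h : (GG S).Reachable x y) : x = y := by
  obtain ⟨p⟩ := h
  cases p with
  | nil => rfl
  | cons h' p' =>
    rw [SimpleGraph.fromEdgeSet_adj] at h'
    exact absurd (hendp _ (by simpa using h'.1) x (by simp)) hx

/-- double counting -/
lemma swap_count (S : Finset (Sym2 α)) (M : Finset α) :
    ∑ z ∈ M, deg S z = ∑ g ∈ S, (M.filter (· ∈ g)).card := by
  unfold deg
  simp only [Finset.card_filter]
  rw [Finset.sum_comm' ]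
  · simp

section Uniq
variable {A : Finset α} {S : Finset (Sym2 α)} {B : Sym2 α → α → ℝ}

lemma col_formula (hs : Sys A S B) (y : Sym2 α → ℝ) :
    ∀ f ∈ S, (∑ j ∈ A, (∑ g ∈ S.filter fun g => j ∈ g, y g) * B f j) = y f := by
  intro f hf
  have step1 : ∀ j ∈ A, (∑ g ∈ S.filter fun g => j ∈ g, y g) * B f j
      = ∑ g ∈ S, if j ∈ g then y g * B f j else 0 := by
    intro j _
    rw [Finset.sum_mul, ← Finset.sum_filter]
  rw [Finset.sum_congr rfl step1, Finset.sum_comm]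
  have step2 : ∀ g ∈ S, (∑ j ∈ A, if j ∈ g then y g * B f j else 0)
      = y g * (if f = g then 1 else 0) := by
    intro g hg
    rw [← Finset.sum_filter, ← Finset.mul_sum]
    congr 1
    have : A.filter (· ∈ g) = Finset.univ.filter (· ∈ g) := by
      ext j
      simp only [Finset.mem_filter, Finset.mem_univ, true_and, and_iff_right_iff_imp]
      exact hs.endp g hg j
    rw [this, ← es, hs.row f hf g hg]
  rw [Finset.sum_congr rfl step2]
  simp only [mul_ite, mul_one, mul_zero]
  rw [Finset.sum_ite_eq S f y]
  simp [hf]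

lemma col_unique (hs : Sys A S B) (y₁ y₂ : Sym2 α → ℝ)
    (h : ∀ j ∈ A, (∑ g ∈ S.filter fun g => j ∈ g, y₁ g)
       = ∑ g ∈ S.filter fun g => j ∈ g, y₂ g) :
    ∀ f ∈ S, y₁ f = y₂ f := by
  intro f hf
  rw [← col_formula hs y₁ f hf, ← col_formula hs y₂ f hf]
  exact Finset.sum_congr rfl fun j hj => by rw [h j hj]

lemma row_formula (hs : Sys A S B) (w : α → ℝ) (hsupp : ∀ i ∉ A, w i = 0) :
    ∀ i : α, (∑ f ∈ S, es w f * B f i) = w i := by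
  intro i
  have step1 : ∀ f ∈ S, es w f * B f i = ∑ j : α, if j ∈ f then w j * B f i else 0 := by
    intro f _
    rw [es, Finset.sum_mul, ← Finset.sum_filter]
  rw [Finset.sum_congr rfl step1, Finset.sum_comm]
  have step2 : ∀ j : α, (∑ f ∈ S, if j ∈ f then w j * B f i else 0)
      = w j * (∑ f ∈ S.filter fun f => j ∈ f, B f i) := by
    intro j
    rw [← Finset.sum_filter, Finset.mul_sum]
  rw [Finset.sum_congr rfl (fun j _ => step2 j)]
  rw [← Finset.sum_subset (Finset.subset_univ A)
    (fun j _ hj => by rw [hsupp j hj, zero_mul])]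
  have step3 : ∀ j ∈ A, w j * (∑ f ∈ S.filter fun f => j ∈ f, B f i)
      = if j = i then w j else 0 := by
    intro j hj
    rw [hs.col j hj i]
    simp [mul_ite]
  rw [Finset.sum_congr rfl step3, Finset.sum_ite_eq' A i w]
  by_cases hiA : i ∈ A
  · simp [hiA]
  · simp [hiA, hsupp i hiA]

lemma row_unique (hs : Sys A S B) (w₁ w₂ : α → ℝ)
    (h1 : ∀ i ∉ A, w₁ i = 0) (h2 : ∀ i ∉ A, w₂ i = 0)
    (h : ∀ f ∈ S, es w₁ f = es w₂ f) : w₁ = w₂ := by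
  funext i
  rw [← row_formula hs w₁ h1 i, ← row_formula hs w₂ h2 i]
  exact Finset.sum_congr rfl fun f hf => by rw [h f hf]

end Uniq

section Deg
variable {A : Finset α} {S : Finset (Sym2 α)} {B : Sym2 α → α → ℝ}

lemma deg_pos (hs : Sys A S B) {v : α} (hv : v ∈ A) : 0 < deg S v := by
  by_contra h
  have hemp : S.filter (fun f => v ∈ f) = ∅ := by
    rw [← Finset.card_eq_zero]
    simpa [deg] using h
  have := hs.col v hv v
  rw [hemp] at this
  simp at this

lemma handshake (hs : Sys A S B) : ∑ z ∈ A, deg S z = 2 * S.card := by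
  rw [swap_count]
  rw [Finset.sum_congr rfl (fun g hg => ?_), Finset.sum_const, smul_eq_mul, mul_comm]
  obtain ⟨p, q, hpq, rfl⟩ := exists_pair (hs.nd g hg)
  have : A.filter (· ∈ s(p, q)) = ({p, q} : Finset α) := by
    ext j
    simp only [Finset.mem_filter, Sym2.mem_iff, Finset.mem_insert, Finset.mem_singleton]
    constructor
    · tauto
    · rintro (rfl | rfl)
      · exact ⟨hs.endp _ hg j (by simp), Or.inl rfl⟩
      · exact ⟨hs.endp _ hg j (by simp), Or.inr rfl⟩
  rw [this, Finset.card_pair hpq]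

lemma mem_Kv_self (S : Finset (Sym2 α)) (x : α) : x ∈ Kv S x := by
  simp only [Kv, Finset.mem_filter, Finset.mem_univ, true_and]
  exact SimpleGraph.Reachable.refl x

lemma mem_Kv {S : Finset (Sym2 α)} {x y : α} : y ∈ Kv S x ↔ (GG S).Reachable x y := by
  simp [Kv]

lemma Kv_subset_A (hs : Sys A S B) {x : α} (hx : x ∈ A) : Kv S x ⊆ A := by
  intro y hy
  rw [mem_Kv] at hy
  by_contra hyA
  exact hyA (isolated_of_notMem hs.endp hyA hy.symm ▸ hx)

end Deg

section Triangle
variable {A : Finset α} {S : Finset (Sym2 α)} {B : Sym2 α → α → ℝ}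

lemma card_three_mem {s : Finset α} (h : s.card = 3) {u : α} (hu : u ∈ s) :
    ∃ y z, u ≠ y ∧ u ≠ z ∧ y ≠ z ∧ s = {u, y, z} := by
  obtain ⟨a, b, c, hab, hac, hbc, rfl⟩ := Finset.card_eq_three.mp h
  simp only [Finset.mem_insert, Finset.mem_singleton] at hu
  rcases hu with rfl | rfl | rfl
  · exact ⟨b, c, hab, hac, hbc, rfl⟩
  · exact ⟨a, c, hab.symm, hbc, hac, by ext x; simp; tauto⟩
  · exact ⟨a, b, hac.symm, hbc.symm, hab, by ext x; simp; tauto⟩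

lemma reach_of_mem_edge {S : Finset (Sym2 α)} {f : Sym2 α} (hf : f ∈ S)
    (hnd : ¬ f.IsDiag) {x y : α} (hx : x ∈ f) (hy : y ∈ f) : (GG S).Reachable x y := by
  obtain ⟨p, q, hpq, rfl⟩ := exists_pair hnd
  have hadj := adj_of_mem hf hpq
  rw [Sym2.mem_iff] at hx hy
  rcases hx with rfl | rfl <;> rcases hy with rfl | rfl
  · exact SimpleGraph.Reachable.refl _
  · exact hadj.reachable
  · exact hadj.symm.reachable
  · exact SimpleGraph.Reachable.refl _

/-- every edge of `S` touching the component of `u` is in `Ke S u` -/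
lemma mem_Ke_of_touch (hs : Sys A S B) {u j : α} {f : Sym2 α} (hf : f ∈ S)
    (hj : j ∈ f) (hreach : (GG S).Reachable u j) : f ∈ Ke S u := by
  rw [Ke, Finset.mem_filter]
  refine ⟨hf, fun w hw => hreach.trans (reach_of_mem_edge hf (hs.nd f hf) hj hw)⟩

lemma triangle_struct (hs : Sys A S B) {u : α} (hP : P S u) :
    ∃ y z : α, u ≠ y ∧ u ≠ z ∧ y ≠ z ∧
      s(u, y) ∈ S ∧ s(u, z) ∈ S ∧ s(y, z) ∈ S ∧
      (s(u, y) ≠ s(u, z) ∧ s(u, y) ≠ s(y, z) ∧ s(u, z) ≠ s(y, z)) ∧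
      (∀ f ∈ S, ∀ j ∈ f, (j = u ∨ j = y ∨ j = z) →
        f = s(u, y) ∨ f = s(u, z) ∨ f = s(y, z)) := by
  obtain ⟨hv3, he3⟩ := hP
  obtain ⟨y, z, huy, huz, hyz, hKv⟩ := card_three_mem hv3 (mem_Kv_self S u)
  have hyK : y ∈ Kv S u := by rw [hKv]; simp
  have hzK : z ∈ Kv S u := by rw [hKv]; simp
  -- every edge in Ke has endpoints in {u,y,z}
  have hendKe : ∀ f ∈ Ke S u, f = s(u, y) ∨ f = s(u, z) ∨ f = s(y, z) := by
    intro f hf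
    rw [Ke, Finset.mem_filter] at hf
    obtain ⟨hfS, hre⟩ := hf
    obtain ⟨p, q, hpq, rfl⟩ := exists_pair (hs.nd f hfS)
    have hp : p ∈ ({u, y, z} : Finset α) := by rw [← hKv, mem_Kv]; exact hre p (by simp)
    have hq : q ∈ ({u, y, z} : Finset α) := by rw [← hKv, mem_Kv]; exact hre q (by simp)
    simp only [Finset.mem_insert, Finset.mem_singleton] at hp hq
    rcases hp with rfl | rfl | rfl <;> rcases hq with rfl | rfl | rfl <;>
      simp_all [Sym2.eq_swap, Sym2.eq_iff] <;> tauto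
  -- the three candidate edges, distinct
  have hd1 : s(u, y) ≠ s(u, z) := by simp [Sym2.eq_iff]; tauto
  have hd2 : s(u, y) ≠ s(y, z) := by simp [Sym2.eq_iff]; tauto
  have hd3 : s(u, z) ≠ s(y, z) := by simp [Sym2.eq_iff]; tauto
  have hsub : Ke S u ⊆ ({s(u, y), s(u, z), s(y, z)} : Finset (Sym2 α)) := by
    intro f hf
    rcases hendKe f hf with rfl | rfl | rfl <;> simp
  have hcard3 : ({s(u, y), s(u, z), s(y, z)} : Finset (Sym2 α)).card = 3 := by
    rw [Finset.card_insert_of_notMem (by simp [hd1, hd2]),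
      Finset.card_insert_of_notMem (by simp [hd3]), Finset.card_singleton]
  have hKe : Ke S u = ({s(u, y), s(u, z), s(y, z)} : Finset (Sym2 α)) :=
    Finset.eq_of_subset_of_card_le hsub (by rw [hcard3, he3])
  have hKeS : Ke S u ⊆ S := Finset.filter_subset _ _
  refine ⟨y, z, huy, huz, hyz, ?_, ?_, ?_, ⟨hd1, hd2, hd3⟩, ?_⟩
  · exact hKeS (by rw [hKe]; simp)
  · exact hKeS (by rw [hKe]; simp)
  · exact hKeS (by rw [hKe]; simp)
  · intro f hf j hj hjm
    have : f ∈ Ke S u := by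
      refine mem_Ke_of_touch hs hf hj ?_
      rcases hjm with rfl | rfl | rfl
      · exact SimpleGraph.Reachable.refl j
      · exact mem_Kv.mp hyK
      · exact mem_Kv.mp hzK
    rw [hKe] at this
    simpa using this

end Triangle

section TriCol
variable {A : Finset α} {S : Finset (Sym2 α)} {B : Sym2 α → α → ℝ}

lemma triangle_col (hs : Sys A S B) {u : α} (hP : P S u) :
    ∑ f ∈ S, (B f u)^2 = 3/4 := by
  obtain ⟨y, z, huy, huz, hyz, h1, h2, h3, ⟨hd1, hd2, hd3⟩, _honly⟩ := triangle_struct hs hP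
  set γ : Sym2 α → ℝ := fun f =>
    (if f = s(u, y) then (1:ℝ)/2 else 0) + (if f = s(u, z) then 1/2 else 0)
      + (if f = s(y, z) then -(1/2) else 0) with hγ
  have hBγ : ∀ f ∈ S, B f u = γ f := by
    refine col_unique hs _ _ ?_
    intro j hj
    rw [hs.col j hj u]
    have expand : (∑ g ∈ S.filter (fun g => j ∈ g), γ g)
        = (if s(u, y) ∈ S.filter (fun g => j ∈ g) then (1:ℝ)/2 else 0)
        + (if s(u, z) ∈ S.filter (fun g => j ∈ g) then (1:ℝ)/2 else 0)
        + (if s(y, z) ∈ S.filter (fun g => j ∈ g) then -((1:ℝ)/2) else 0) := by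
      rw [hγ]
      rw [Finset.sum_add_distrib, Finset.sum_add_distrib]
      rw [Finset.sum_ite_eq' _ (s(u, y)) (fun _ => (1:ℝ)/2),
        Finset.sum_ite_eq' _ (s(u, z)) (fun _ => (1:ℝ)/2),
        Finset.sum_ite_eq' _ (s(y, z)) (fun _ => -((1:ℝ)/2))]
    rw [expand]
    have m1 : (s(u, y) ∈ S.filter (fun g => j ∈ g)) ↔ (j = u ∨ j = y) := by
      simp [Finset.mem_filter, h1, Sym2.mem_iff]
    have m2 : (s(u, z) ∈ S.filter (fun g => j ∈ g)) ↔ (j = u ∨ j = z) := by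
      simp [Finset.mem_filter, h2, Sym2.mem_iff]
    have m3 : (s(y, z) ∈ S.filter (fun g => j ∈ g)) ↔ (j = y ∨ j = z) := by
      simp [Finset.mem_filter, h3, Sym2.mem_iff]
    rw [if_congr m1 rfl rfl, if_congr m2 rfl rfl, if_congr m3 rfl rfl]
    by_cases hju : j = u <;> by_cases hjy : j = y <;> by_cases hjz : j = z <;>
      simp_all <;> norm_num
  have hsum : ∑ f ∈ S, (B f u)^2 = ∑ f ∈ S, (γ f)^2 :=
    Finset.sum_congr rfl fun f hf => by rw [hBγ f hf]
  rw [hsum]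
  have hsq : ∀ f, (γ f)^2 = (if f = s(u, y) then (1:ℝ)/4 else 0)
      + (if f = s(u, z) then (1:ℝ)/4 else 0) + (if f = s(y, z) then (1:ℝ)/4 else 0) := by
    intro f
    rw [hγ]
    by_cases e1 : f = s(u, y) <;> by_cases e2 : f = s(u, z) <;> by_cases e3 : f = s(y, z) <;>
      simp_all <;> norm_num
  rw [Finset.sum_congr rfl (fun f _ => hsq f)]
  rw [Finset.sum_add_distrib, Finset.sum_add_distrib,
    Finset.sum_ite_eq' _ (s(u, y)) (fun _ => (1:ℝ)/4),
    Finset.sum_ite_eq' _ (s(u, z)) (fun _ => (1:ℝ)/4),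
    Finset.sum_ite_eq' _ (s(y, z)) (fun _ => (1:ℝ)/4)]
  rw [if_pos h1, if_pos h2, if_pos h3]
  norm_num

end TriCol

noncomputable def Kc (S : Finset (Sym2 α)) (e : Sym2 α) : Finset α :=
  Finset.univ.filter fun x => ∀ u ∈ e, (GG S).Reachable x u

lemma mem_Kc {S : Finset (Sym2 α)} {e : Sym2 α} {x : α} :
    x ∈ Kc S e ↔ ∀ u ∈ e, (GG S).Reachable x u := by simp [Kc]

section TwoReg
variable {A : Finset α} {S : Finset (Sym2 α)} {B : Sym2 α → α → ℝ}

lemma supported_on_comp (hs : Sys A S B) {e : Sym2 α} (he : e ∈ S) {i : α}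
    (h : i ∉ Kc S e) : B e i = 0 := by
  have key : B e = fun i => if i ∈ Kc S e then B e i else 0 := by
    refine row_unique hs _ _ (fun i hi => hs.supp e he i hi) ?_ ?_
    · intro i hi
      split
      · exact hs.supp e he i hi
      · rfl
    · intro f hf
      obtain ⟨p, q, hpq, rfl⟩ := exists_pair (hs.nd f hf)
      rw [es_pair _ hpq, es_pair _ hpq]
      have hiff : p ∈ Kc S e ↔ q ∈ Kc S e := by
        have hadj := (adj_of_mem hf hpq).reachable
        simp only [mem_Kc]
        exact ⟨fun hp u hu => hadj.symm.trans (hp u hu),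
               fun hq u hu => hadj.trans (hq u hu)⟩
      by_cases hp : p ∈ Kc S e
      · rw [if_pos hp, if_pos (hiff.mp hp)]
      · rw [if_neg hp, if_neg (fun hq => hp (hiff.mpr hq)), add_zero]
        have hfe : s(p, q) ≠ e := by
          rintro rfl
          exact hp (mem_Kc.mpr fun u hu =>
            reach_of_mem_edge hf (hs.nd _ hf) (by simp) hu)
        have := hs.row e he (s(p, q)) hf
        rw [es_pair _ hpq] at this
        rw [this, if_neg (fun hh => hfe hh.symm)]
  have hk := congrFun key i
  simp only [if_neg h] at hk
  exact hk

lemma Kc_subset_A (hs : Sys A S B) {e : Sym2 α} (he : e ∈ S) :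
    Kc S e ⊆ A := by
  intro x hx
  obtain ⟨p, q, hpq, rfl⟩ := exists_pair (hs.nd e he)
  rw [mem_Kc] at hx
  by_contra hxA
  have h1 := isolated_of_notMem hs.endp hxA (hx p (by simp))
  have h2 := isolated_of_notMem hs.endp hxA (hx q (by simp))
  exact hpq (h1 ▸ h2)

lemma two_reg_edge_bound (hs : Sys A S B) (h2 : ∀ v ∈ A, deg S v = 2)
    {e : Sym2 α} (he : e ∈ S) :
    ((Kc S e).card : ℝ) / 4 ≤ ∑ i, (B e i)^2 := by
  obtain ⟨a, b, hab, rfl⟩ := exists_pair (hs.nd e he)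
  set w : α → ℝ := fun i => B s(a, b) i with hw
  have hadj : (GG S).Adj a b := adj_of_mem he hab
  have haK : a ∈ Kc S s(a, b) := mem_Kc.mpr fun u hu =>
    reach_of_mem_edge he (hs.nd _ he) (by simp) hu
  have hbK : b ∈ Kc S s(a, b) := mem_Kc.mpr fun u hu =>
    reach_of_mem_edge he (hs.nd _ he) (by simp) hu
  -- anti-propagation along non-e edges
  have stepA : ∀ p q : α, p ≠ q → s(p, q) ∈ S → s(p, q) ≠ s(a, b) → w p = -w q := by
    intro p q hpq hgS hge
    have := hs.row (s(a, b)) he (s(p, q)) hgS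
    rw [es_pair _ hpq, if_neg (fun hh => hge hh.symm)] at this
    linarith
  -- all vertices of the component have |w| = |w a| or |w b|
  have claim1 : ∀ x ∈ Kc S s(a, b), |w x| = |w a| ∨ |w x| = |w b| := by
    intro x hx
    by_contra hcon
    push_neg at hcon
    obtain ⟨hxa, hxb⟩ := hcon
    have hreach : (GG S).Reachable x a := (mem_Kc.mp hx) a (by simp)
    obtain ⟨p⟩ := hreach
    obtain ⟨d, _, hdf, hds⟩ := p.exists_boundary_dart {z | |w z| = |w x|} rfl
      (fun hh => hxa (by simpa using hh.symm))
    have hdadj := d.adj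
    rw [SimpleGraph.fromEdgeSet_adj] at hdadj
    obtain ⟨hdS, hdne⟩ := hdadj
    by_cases hge : s(d.fst, d.snd) = s(a, b)
    · rw [Sym2.eq_iff] at hge
      rcases hge with ⟨h1, _⟩ | ⟨h1, _⟩
      · exact hxa (by rw [← h1]; exact (Set.mem_setOf_eq ▸ hdf).symm)
      · exact hxb (by rw [← h1]; exact (Set.mem_setOf_eq ▸ hdf).symm)
    · have := stepA d.fst d.snd hdne (by simpa using hdS) hge
      apply hds
      have : |w d.snd| = |w d.fst| := by rw [this]; simp [abs_neg]
      rw [Set.mem_setOf_eq, this]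
      exact hdf
  -- |w a| = |w b|
  have claim2 : |w a| = |w b| := by
    by_contra hne
    set M : Finset α := (Kc S s(a, b)).filter (fun z => |w z| = |w a|) with hM
    have haM : a ∈ M := by rw [hM, Finset.mem_filter]; exact ⟨haK, rfl⟩
    have hbM : b ∉ M := by
      rw [hM, Finset.mem_filter]
      rintro ⟨-, hh⟩
      exact hne hh.symm
    have hMA : M ⊆ A := fun z hz =>
      Kc_subset_A hs he (Finset.mem_filter.mp hz).1
    have hdegsum : ∑ z ∈ M, deg S z = 2 * M.card := by
      rw [Finset.sum_congr rfl (fun z hz => h2 z (hMA hz)), Finset.sum_const,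
        smul_eq_mul, mul_comm]
    have hswap := swap_count S M
    -- at e the count is 1
    have hce : (M.filter (· ∈ s(a, b))).card = 1 := by
      have : M.filter (· ∈ s(a, b)) = {a} := by
        ext j
        simp only [Finset.mem_filter, Sym2.mem_iff, Finset.mem_singleton]
        constructor
        · rintro ⟨hjM, rfl | rfl⟩
          · rfl
          · exact absurd hjM hbM
        · rintro rfl
          exact ⟨haM, Or.inl rfl⟩
      rw [this, Finset.card_singleton]
    -- even counts elsewhere
    have hcg : ∀ g ∈ S.erase (s(a, b)), 2 ∣ (M.filter (· ∈ g)).card := by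
      intro g hg
      obtain ⟨hgne, hgS⟩ := Finset.mem_erase.mp hg
      obtain ⟨p, q, hpq, rfl⟩ := exists_pair (hs.nd g hgS)
      by_cases hp : p ∈ M
      · have hpK := (Finset.mem_filter.mp hp).1
        have hpa := (Finset.mem_filter.mp hp).2
        have hqK : q ∈ Kc S s(a, b) := by
          rw [mem_Kc] at hpK ⊢
          intro u hu
          exact ((adj_of_mem hgS hpq).symm.reachable).trans (hpK u hu)
        have hq : q ∈ M := by
          rw [hM, Finset.mem_filter]
          refine ⟨hqK, ?_⟩
          rw [← hpa, stepA p q hpq hgS hgne]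
          simp [abs_neg]
        have : M.filter (· ∈ s(p, q)) = {p, q} := by
          ext j
          simp only [Finset.mem_filter, Sym2.mem_iff, Finset.mem_insert,
            Finset.mem_singleton]
          constructor
          · tauto
          · rintro (rfl | rfl)
            · exact ⟨hp, Or.inl rfl⟩
            · exact ⟨hq, Or.inr rfl⟩
        rw [this, Finset.card_pair hpq]
      · have hq : q ∉ M := by
          intro hq
          apply hp
          have hqK := (Finset.mem_filter.mp hq).1
          have hqa := (Finset.mem_filter.mp hq).2
          have hpK : p ∈ Kc S s(a, b) := by
            rw [mem_Kc] at hqK ⊢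
            intro u hu
            exact ((adj_of_mem hgS hpq).reachable).trans (hqK u hu)
          rw [hM, Finset.mem_filter]
          refine ⟨hpK, ?_⟩
          rw [← hqa, stepA p q hpq hgS hgne]
          simp [abs_neg]
        have : M.filter (· ∈ s(p, q)) = ∅ := by
          ext j
          simp only [Finset.mem_filter, Sym2.mem_iff, Finset.notMem_empty,
            iff_false, not_and]
          rintro hjM (rfl | rfl)
          · exact hp hjM
          · exact hq hjM
        rw [this]
        simp
    have hsum : ∑ g ∈ S, (M.filter (· ∈ g)).card
        = (M.filter (· ∈ s(a, b))).card + ∑ g ∈ S.erase (s(a, b)), (M.filter (· ∈ g)).card :=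
      (Finset.add_sum_erase S _ he).symm
    obtain ⟨k, hk⟩ := Finset.dvd_sum hcg
    rw [hsum, hce, hk] at hswap
    rw [hdegsum] at hswap
    omega
  -- |w a| ≥ 1/2
  have claim3 : (1:ℝ)/2 ≤ |w a| := by
    have := hs.row (s(a, b)) he (s(a, b)) he
    rw [es_pair _ hab, if_pos rfl] at this
    have habs : (1:ℝ) ≤ |w a| + |w b| := by
      calc (1:ℝ) = w a + w b := this.symm
      _ ≤ |w a + w b| := le_abs_self _
      _ ≤ |w a| + |w b| := abs_add_le _ _
    rw [← claim2] at habs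
    linarith
  -- conclude
  have hdown : ∀ x ∈ Kc S s(a, b), ((1:ℝ)/2)^2 ≤ (w x)^2 := by
    intro x hx
    rw [← sq_abs (w x)]
    have : (1:ℝ)/2 ≤ |w x| := by
      rcases claim1 x hx with hh | hh
      · rw [hh]; exact claim3
      · rw [hh, ← claim2]; exact claim3
    exact pow_le_pow_left₀ (by norm_num) this 2
  calc ((Kc S s(a, b)).card : ℝ) / 4
      = ∑ _x ∈ Kc S s(a, b), ((1:ℝ)/2)^2 := by
        rw [Finset.sum_const, nsmul_eq_mul]; norm_num; ring
    _ ≤ ∑ x ∈ Kc S s(a, b), (w x)^2 := Finset.sum_le_sum hdown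
    _ ≤ ∑ x, (w x)^2 := Finset.sum_le_sum_of_subset_of_nonneg
        (Finset.subset_univ _) (fun i _ _ => sq_nonneg _)

end TwoReg

section NoLeaf
variable {A : Finset α} {S : Finset (Sym2 α)} {B : Sym2 α → α → ℝ}

lemma other_endpoint {f : Sym2 α} (hnd : ¬ f.IsDiag) {x : α} (hx : x ∈ f) :
    ∃ y, y ≠ x ∧ f = s(x, y) := by
  obtain ⟨p, q, hpq, rfl⟩ := exists_pair hnd
  rw [Sym2.mem_iff] at hx
  rcases hx with rfl | rfl
  · exact ⟨q, fun hh => hpq hh.symm, rfl⟩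
  · exact ⟨p, hpq, Sym2.eq_swap⟩

lemma swap2 (S : Finset (Sym2 α)) :
    ∑ e ∈ S, (Kc S e).card = ∑ x : α, (Ke S x).card := by
  unfold Kc Ke
  simp only [Finset.card_filter]
  rw [Finset.sum_comm]

lemma Ke_card_eq (hs : Sys A S B) (h2 : ∀ v ∈ A, deg S v = 2) {x : α} (hx : x ∈ A) :
    (Ke S x).card = (Kv S x).card := by
  have hswap := swap_count S (Kv S x)
  have hdeg : ∑ z ∈ Kv S x, deg S z = 2 * (Kv S x).card := by
    rw [Finset.sum_congr rfl (fun z hz => h2 z (Kv_subset_A hs hx hz)),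
      Finset.sum_const, smul_eq_mul, mul_comm]
  have hper : ∀ g ∈ S, ((Kv S x).filter (· ∈ g)).card = if g ∈ Ke S x then 2 else 0 := by
    intro g hg
    obtain ⟨p, q, hpq, rfl⟩ := exists_pair (hs.nd g hg)
    by_cases hKe : s(p, q) ∈ Ke S x
    · rw [if_pos hKe]
      rw [Ke, Finset.mem_filter] at hKe
      have : (Kv S x).filter (· ∈ s(p, q)) = {p, q} := by
        ext j
        simp only [Finset.mem_filter, Sym2.mem_iff, Finset.mem_insert, Finset.mem_singleton]
        constructor
        · tauto
        · rintro (rfl | rfl)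
          · exact ⟨mem_Kv.mpr (hKe.2 j (by simp)), Or.inl rfl⟩
          · exact ⟨mem_Kv.mpr (hKe.2 j (by simp)), Or.inr rfl⟩
      rw [this, Finset.card_pair hpq]
    · rw [if_neg hKe]
      have : (Kv S x).filter (· ∈ s(p, q)) = ∅ := by
        ext j
        simp only [Finset.mem_filter, Finset.notMem_empty, iff_false, not_and]
        intro hjK hjg
        exact hKe (mem_Ke_of_touch hs hg hjg (mem_Kv.mp hjK))
      rw [this, Finset.card_empty]
  rw [Finset.sum_congr rfl hper, ← Finset.sum_filter] at hswap
  have : S.filter (· ∈ Ke S x) = Ke S x := by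
    ext g
    simp only [Finset.mem_filter, and_iff_right_iff_imp]
    intro hg
    exact Finset.filter_subset _ _ hg
  rw [this, Finset.sum_const, smul_eq_mul, mul_comm] at hswap
  omega

lemma Kv_card_ge_three (hs : Sys A S B) (h2 : ∀ v ∈ A, deg S v = 2) {x : α} (hx : x ∈ A) :
    3 ≤ (Kv S x).card := by
  have hdeg := h2 x hx
  rw [deg] at hdeg
  have hlt : 1 < (S.filter fun f => x ∈ f).card := by omega
  obtain ⟨f1, hf1, f2, hf2, hne⟩ := Finset.one_lt_card.mp hlt
  obtain ⟨hf1S, hxf1⟩ := Finset.mem_filter.mp hf1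
  obtain ⟨hf2S, hxf2⟩ := Finset.mem_filter.mp hf2
  obtain ⟨y1, hy1x, rfl⟩ := other_endpoint (hs.nd f1 hf1S) hxf1
  obtain ⟨y2, hy2x, rfl⟩ := other_endpoint (hs.nd f2 hf2S) hxf2
  have hy12 : y1 ≠ y2 := by
    rintro rfl
    exact hne rfl
  have hsub : ({x, y1, y2} : Finset α) ⊆ Kv S x := by
    intro j hj
    simp only [Finset.mem_insert, Finset.mem_singleton] at hj
    rcases hj with rfl | rfl | rfl
    · exact mem_Kv_self S j
    · exact mem_Kv.mpr (adj_of_mem hf1S (fun hh => hy1x hh.symm)).reachable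
    · exact mem_Kv.mpr (adj_of_mem hf2S (fun hh => hy2x hh.symm)).reachable
  calc 3 = ({x, y1, y2} : Finset α).card := by
        rw [Finset.card_insert_of_notMem (by simp [Ne.symm hy1x, Ne.symm hy2x]),
          Finset.card_insert_of_notMem (by simp [hy12]), Finset.card_singleton]
    _ ≤ (Kv S x).card := Finset.card_le_card hsub

lemma notP_of_notMem (hs : Sys A S B) {x : α} (hx : x ∉ A) : ¬ P S x := by
  have : Kv S x = {x} := by
    ext y
    rw [mem_Kv, Finset.mem_singleton]
    exact ⟨fun h => (isolated_of_notMem hs.endp hx h).symm, fun h => h ▸ SimpleGraph.Reachable.refl _⟩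
  intro hP
  rw [P, this] at hP
  simp at hP

lemma T_eq (hs : Sys A S B) : T S = ∑ x ∈ A, if P S x then 1 else 0 := by
  rw [T, Finset.card_filter]
  refine (Finset.sum_subset (Finset.subset_univ A) ?_).symm
  intro x _ hx
  rw [if_neg (notP_of_notMem hs hx)]

lemma noleaf_case (hs : Sys A S B) (h2 : ∀ v ∈ A, deg S v = 2) :
    (A.card : ℝ) - (T S : ℝ) / 4 ≤ ∑ f ∈ S, ∑ i, (B f i)^2 := by
  have step1 : ∑ f ∈ S, ((Kc S f).card : ℝ) / 4 ≤ ∑ f ∈ S, ∑ i, (B f i)^2 :=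
    Finset.sum_le_sum fun f hf => two_reg_edge_bound hs h2 hf
  have step2 : ∑ f ∈ S, ((Kc S f).card : ℝ) / 4 = ∑ x : α, ((Ke S x).card : ℝ) / 4 := by
    rw [← Finset.sum_div, ← Finset.sum_div]
    congr 1
    push_cast
    exact_mod_cast congrArg (Nat.cast : ℕ → ℝ) (swap2 S)
  have step3 : ∑ x ∈ A, ((Ke S x).card : ℝ) / 4 ≤ ∑ x : α, ((Ke S x).card : ℝ) / 4 :=
    Finset.sum_le_sum_of_subset_of_nonneg (Finset.subset_univ A)
      (fun i _ _ => by positivity)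
  have step4 : ∀ x ∈ A, (1 : ℝ) - (if P S x then (1:ℝ) else 0) / 4 ≤ ((Ke S x).card : ℝ) / 4 := by
    intro x hx
    have hKeKv := Ke_card_eq hs h2 hx
    have h3 := Kv_card_ge_three hs h2 hx
    by_cases hc : (Kv S x).card = 3
    · have hP : P S x := ⟨hc, by rw [hKeKv, hc]⟩
      rw [if_pos hP, hKeKv, hc]
      norm_num
    · have h4 : 4 ≤ (Ke S x).card := by omega
      have : (4 : ℝ) ≤ ((Ke S x).card : ℝ) := by exact_mod_cast h4
      split <;> linarith
  have step5 : (A.card : ℝ) - (T S : ℝ) / 4 ≤ ∑ x ∈ A, ((Ke S x).card : ℝ) / 4 := by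
    calc (A.card : ℝ) - (T S : ℝ) / 4
        = ∑ x ∈ A, ((1:ℝ) - (if P S x then (1:ℝ) else 0) / 4) := by
          rw [Finset.sum_sub_distrib, Finset.sum_const, ← Finset.sum_div]
          rw [T_eq hs]
          push_cast
          rw [Finset.sum_ite, Finset.sum_const, Finset.sum_const]
          simp [mul_comm]
      _ ≤ ∑ x ∈ A, ((Ke S x).card : ℝ) / 4 := Finset.sum_le_sum step4
  linarith

end NoLeaf

section Leaf
variable {A : Finset α} {S : Finset (Sym2 α)} {B : Sym2 α → α → ℝ}

lemma comp_invariant {S : Finset (Sym2 α)} {x y : α} (h : (GG S).Reachable x y) :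
    Kv S x = Kv S y ∧ Ke S x = Ke S y := by
  constructor
  · ext z
    rw [mem_Kv, mem_Kv]
    exact ⟨fun hh => h.symm.trans hh, fun hh => h.trans hh⟩
  · ext f
    rw [Ke, Ke, Finset.mem_filter, Finset.mem_filter]
    exact ⟨fun ⟨hf, hh⟩ => ⟨hf, fun w hw => h.symm.trans (hh w hw)⟩,
           fun ⟨hf, hh⟩ => ⟨hf, fun w hw => h.trans (hh w hw)⟩⟩

lemma walk_avoid {S : Finset (Sym2 α)} {v u : α} (hvu : v ≠ u)
    (honly : ∀ f ∈ S, v ∈ f → f = s(v, u)) {x y : α}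
    (p : (GG S).Walk x y) :
    ¬ (GG (S.erase s(v, u))).Reachable x u → x ≠ v →
      (GG (S.erase s(v, u))).Reachable x y := by
  induction p with
  | nil => intro _ _; exact SimpleGraph.Reachable.refl _
  | @cons x z y h p ih =>
    intro hxu hxv
    rw [SimpleGraph.fromEdgeSet_adj] at h
    obtain ⟨hxzS, hxz⟩ := h
    have hxzS' : s(x, z) ∈ S := by simpa using hxzS
    by_cases hge : s(x, z) = s(v, u)
    · rw [Sym2.eq_iff] at hge
      rcases hge with ⟨rfl, rfl⟩ | ⟨rfl, rfl⟩
      · exact absurd rfl hxv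
      · exact absurd (SimpleGraph.Reachable.refl _) hxu
    · have hadj' : (GG (S.erase s(v, u))).Adj x z := by
        rw [SimpleGraph.fromEdgeSet_adj]
        exact ⟨Finset.mem_coe.mpr (Finset.mem_erase.mpr ⟨hge, hxzS'⟩), hxz⟩
      have hzv : z ≠ v := by
        rintro rfl
        exact hge (honly _ hxzS' (by simp))
      have hzu : ¬ (GG (S.erase s(v, u))).Reachable z u := fun hh =>
        hxu (hadj'.reachable.trans hh)
      exact hadj'.reachable.trans (ih hzu hzv)

lemma P_transfer {S : Finset (Sym2 α)} {v u : α} (hvu : v ≠ u)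
    (he : s(v, u) ∈ S) (honly : ∀ f ∈ S, v ∈ f → f = s(v, u)) {x : α}
    (hxv : x ≠ v) (hxu : ¬ (GG (S.erase s(v, u))).Reachable x u)
    (hP : P (S.erase s(v, u)) x) : P S x := by
  set S' := S.erase s(v, u) with hS'
  have hmono : GG S' ≤ GG S := by
    apply SimpleGraph.fromEdgeSet_mono
    exact_mod_cast Finset.erase_subset _ _
  have hKv : Kv S x = Kv S' x := by
    ext z
    rw [mem_Kv, mem_Kv]
    constructor
    · intro hh
      obtain ⟨p⟩ := hh
      exact walk_avoid hvu honly p hxu hxv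
    · intro hh
      exact hh.mono hmono
  have hKe : Ke S x = Ke S' x := by
    ext f
    rw [Ke, Ke, Finset.mem_filter, Finset.mem_filter]
    constructor
    · rintro ⟨hfS, hre⟩
      have hfe : f ≠ s(v, u) := by
        rintro rfl
        obtain ⟨p⟩ := hre u (by simp)
        exact hxu (walk_avoid hvu honly p hxu hxv)
      refine ⟨Finset.mem_erase.mpr ⟨hfe, hfS⟩, fun w hw => ?_⟩
      obtain ⟨p⟩ := hre w hw
      exact walk_avoid hvu honly p hxu hxv
    · rintro ⟨hfS', hre⟩
      exact ⟨Finset.mem_erase.mp hfS' |>.2, fun w hw => (hre w hw).mono hmono⟩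
  exact ⟨by rw [hKv]; exact hP.1, by rw [hKe]; exact hP.2⟩

lemma T_bound {S : Finset (Sym2 α)} {v u : α} (hvu : v ≠ u)
    (he : s(v, u) ∈ S) (honly : ∀ f ∈ S, v ∈ f → f = s(v, u))
    {A' : Finset α} {B' : Sym2 α → α → ℝ} (hs' : Sys A' (S.erase s(v, u)) B')
    (hvA' : v ∉ A') :
    (T (S.erase s(v, u)) : ℝ) ≤ (T S : ℝ)
      + 3 * (if P (S.erase s(v, u)) u then 1 else 0) := by
  set S' := S.erase s(v, u) with hS'
  by_cases hPu : P S' u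
  · rw [if_pos hPu]
    have hsub : Finset.univ.filter (P S') ⊆ Finset.univ.filter (P S) ∪ Kv S' u := by
      intro x hx
      have hPx : P S' x := (Finset.mem_filter.mp hx).2
      by_cases hru : (GG S').Reachable x u
      · exact Finset.mem_union_right _ (mem_Kv.mpr hru.symm)
      · have hxv : x ≠ v := by
          rintro rfl
          exact notP_of_notMem hs' hvA' hPx
        exact Finset.mem_union_left _
          (Finset.mem_filter.mpr ⟨Finset.mem_univ x, P_transfer hvu he honly hxv hru hPx⟩)
    have hcard : T S' ≤ T S + 3 := by
      calc T S' ≤ (Finset.univ.filter (P S) ∪ Kv S' u).card := Finset.card_le_card hsub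
        _ ≤ T S + (Kv S' u).card := Finset.card_union_le _ _
        _ = T S + 3 := by rw [hPu.1]
    have hc : (T S' : ℝ) ≤ (T S : ℝ) + 3 := by exact_mod_cast hcard
    linarith
  · rw [if_neg hPu]
    have hsub : Finset.univ.filter (P S') ⊆ Finset.univ.filter (P S) := by
      intro x hx
      have hPx : P S' x := (Finset.mem_filter.mp hx).2
      by_cases hru : (GG S').Reachable x u
      · obtain ⟨h1, h2⟩ := comp_invariant hru
        exact absurd ⟨h1 ▸ hPx.1, h2 ▸ hPx.2⟩ hPu
      · have hxv : x ≠ v := by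
          rintro rfl
          exact notP_of_notMem hs' hvA' hPx
        exact Finset.mem_filter.mpr ⟨Finset.mem_univ x, P_transfer hvu he honly hxv hru hPx⟩
    have hc : (T S' : ℝ) ≤ (T S : ℝ) := by
      exact_mod_cast Finset.card_le_card hsub
    linarith

end Leaf

theorem main_ineq : ∀ (n : ℕ) (A : Finset α) (S : Finset (Sym2 α)) (B : Sym2 α → α → ℝ),
    A.card ≤ n → Sys A S B →
    (A.card : ℝ) - (T S : ℝ) / 4 ≤ ∑ f ∈ S, ∑ i, (B f i)^2 := by
  intro n
  induction n with
  | zero =>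
    intro A S B hcard hs
    have hA : A = ∅ := Finset.card_eq_zero.mp (Nat.le_zero.mp hcard)
    exact noleaf_case hs (by rw [hA]; intro v hv; simp at hv)
  | succ n ih =>
    intro A S B hcard hs
    by_cases hleaf : ∃ v ∈ A, deg S v = 1
    · obtain ⟨v, hvA, hdeg⟩ := hleaf
      rw [deg] at hdeg
      obtain ⟨e, he⟩ := Finset.card_eq_one.mp hdeg
      have heMem : e ∈ S.filter (fun f => v ∈ f) := he ▸ Finset.mem_singleton_self e
      have heS : e ∈ S := (Finset.mem_filter.mp heMem).1
      have hve : v ∈ e := (Finset.mem_filter.mp heMem).2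
      have honly : ∀ f ∈ S, v ∈ f → f = e := fun f hf hvf =>
        Finset.mem_singleton.mp (he ▸ Finset.mem_filter.mpr ⟨hf, hvf⟩)
      obtain ⟨u, huv, rfl⟩ := other_endpoint (hs.nd e heS) hve
      have hvu : v ≠ u := fun h => huv h.symm
      have huA : u ∈ A := hs.endp _ heS u (by simp)
      set S' := S.erase s(v, u) with hS'def
      set A' := A.erase v with hA'def
      set B' : Sym2 α → α → ℝ := fun f i => if i = v then 0 else B f i with hB'def
      -- the leaf row of B is the delta function at v
      have hBe : B s(v, u) = fun i => if i = v then 1 else 0 := by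
        refine row_unique hs _ _ (fun i hi => hs.supp _ heS i hi) ?_ ?_
        · intro i hi
          rw [if_neg (fun hh : i = v => hi (hh ▸ hvA))]
        · intro f hf
          rw [hs.row _ heS f hf]
          obtain ⟨p, q, hpq, rfl⟩ := exists_pair (hs.nd f hf)
          rw [es_pair _ hpq]
          by_cases h1 : p = v <;> by_cases h2 : q = v
          · exact absurd (h1.trans h2.symm) hpq
          · have hfe := honly _ hf (by rw [Sym2.mem_iff]; exact Or.inl h1.symm)
            rw [if_pos hfe.symm, if_pos h1, if_neg h2]
            norm_num
          · have hfe := honly _ hf (by rw [Sym2.mem_iff]; exact Or.inr h2.symm)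
            rw [if_pos hfe.symm, if_neg h1, if_pos h2]
            norm_num
          · have hne : s(v, u) ≠ s(p, q) := by
              intro hh
              have : v ∈ s(p, q) := hh ▸ (by simp : v ∈ s(v, u))
              rw [Sym2.mem_iff] at this
              rcases this with hv1 | hv2
              · exact h1 hv1.symm
              · exact h2 hv2.symm
            rw [if_neg hne, if_neg h1, if_neg h2]
            norm_num
      -- the reduced system
      have hs' : Sys A' S' B' := by
        refine ⟨?_, ?_, ?_, ?_, ?_, ?_⟩
        · intro f hf
          exact hs.nd f (Finset.mem_erase.mp hf).2
        · intro f hf x hx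
          obtain ⟨hfe, hfS⟩ := Finset.mem_erase.mp hf
          refine Finset.mem_erase.mpr ⟨?_, hs.endp f hfS x hx⟩
          rintro rfl
          exact hfe (honly f hfS hx)
        · rw [hS'def, hA'def, Finset.card_erase_of_mem heS,
            Finset.card_erase_of_mem hvA, hs.cardeq]
        · intro f hf g hg
          obtain ⟨hfe, hfS⟩ := Finset.mem_erase.mp hf
          obtain ⟨hge, hgS⟩ := Finset.mem_erase.mp hg
          have hes : es (B' f) g = es (B f) g := by
            refine Finset.sum_congr rfl ?_
            intro j hj
            rw [Finset.mem_filter] at hj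
            have hjv : j ≠ v := by
              rintro rfl
              exact hge (honly g hgS hj.2)
            simp only [hB'def, if_neg hjv]
          rw [hes, hs.row f hfS g hgS]
        · intro j hj i
          obtain ⟨hjv, hjA⟩ := Finset.mem_erase.mp hj
          by_cases hiv : i = v
          · have hz : ∀ f ∈ S'.filter (fun f => j ∈ f), B' f i = 0 := by
              intro f _
              simp only [hB'def, if_pos hiv]
            rw [Finset.sum_congr rfl hz, Finset.sum_const_zero,
              if_neg (fun hh : j = i => hjv (hh.trans hiv))]
          · have hB'B : ∀ f : Sym2 α, B' f i = B f i := fun f => if_neg hiv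
            rw [Finset.sum_congr rfl (fun f _ => hB'B f)]
            rw [hS'def, Finset.filter_erase]
            by_cases hju : j = u
            · have hmem : s(v, u) ∈ S.filter (fun f => j ∈ f) :=
                Finset.mem_filter.mpr ⟨heS, by rw [Sym2.mem_iff]; exact Or.inr hju⟩
              have hadd : B s(v, u) i + ∑ f ∈ (S.filter (fun f => j ∈ f)).erase s(v, u), B f i
                  = ∑ f ∈ S.filter (fun f => j ∈ f), B f i :=
                Finset.add_sum_erase _ (fun f => B f i) hmem
              have hcol := hs.col j hjA i
              have hBei : B s(v, u) i = 0 := by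
                rw [hBe]
                simp only [if_neg hiv]
              rw [hBei, zero_add] at hadd
              rw [hadd, hcol]
            · have hnm : s(v, u) ∉ S.filter (fun f => j ∈ f) := by
                rw [Finset.mem_filter]
                rintro ⟨-, hjm⟩
                rw [Sym2.mem_iff] at hjm
                rcases hjm with rfl | rfl
                · exact hjv rfl
                · exact hju rfl
              rw [Finset.erase_eq_of_notMem hnm, hs.col j hjA i]
        · intro f hf i hi
          by_cases hiv : i = v
          · simp only [hB'def, if_pos hiv]
          · have hiA : i ∉ A := fun hh => hi (Finset.mem_erase.mpr ⟨hiv, hh⟩)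
            simp only [hB'def, if_neg hiv]
            exact hs.supp f (Finset.mem_erase.mp hf).2 i hiA
      have hA'card : A'.card ≤ n := by
        rw [hA'def, Finset.card_erase_of_mem hvA]
        omega
      have IH := ih A' S' B' hA'card hs'
      have hvA' : v ∉ A' := fun hh => (Finset.mem_erase.mp hh).1 rfl
      have hTb := T_bound hvu heS honly hs' hvA'
      have htri : (3/4 : ℝ) * (if P S' u then 1 else 0) ≤ ∑ f ∈ S', (B' f u)^2 := by
        by_cases hPu : P S' u
        · rw [if_pos hPu, mul_one, triangle_col hs' hPu]
        · rw [if_neg hPu, mul_zero]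
          exact Finset.sum_nonneg fun f _ => sq_nonneg _
      have hsplit : ∑ f ∈ S, ∑ i, (B f i)^2
          = (∑ f ∈ S', ∑ i, (B' f i)^2) + (∑ f ∈ S', (B' f u)^2) + 1 := by
        rw [← Finset.add_sum_erase S _ heS]
        have h1 : ∑ i, (B s(v, u) i)^2 = 1 := by
          have hpt : ∀ i, (B s(v, u) i)^2 = if i = v then (1:ℝ) else 0 := by
            intro i
            rw [hBe]
            by_cases hiv : i = v <;> simp [hiv]
          rw [Finset.sum_congr rfl (fun i _ => hpt i),
            Finset.sum_ite_eq' Finset.univ v (fun _ => (1:ℝ))]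
          simp
        have h2 : ∀ f ∈ S', ∑ i, (B f i)^2 = (∑ i, (B' f i)^2) + (B' f u)^2 := by
          intro f hf
          obtain ⟨hfe, hfS⟩ := Finset.mem_erase.mp hf
          have hrow := hs.row f hfS (s(v, u)) heS
          rw [es_pair _ hvu, if_neg (fun hh => hfe hh)] at hrow
          have hBfu : B' f u = B f u := if_neg (fun hh : u = v => hvu hh.symm)
          have hpoint : ∀ i, (B f i)^2 = (B' f i)^2 + (if i = v then (B' f u)^2 else 0) := by
            intro i
            by_cases hiv : i = v
            · rw [hiv]
              simp only [hB'def, if_pos rfl, hBfu]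
              have hneg : B f v = - B f u := by linarith
              rw [hneg]
              simp [Ne.symm hvu]
            · simp only [hB'def, if_neg hiv, add_zero]
          rw [Finset.sum_congr rfl (fun i _ => hpoint i), Finset.sum_add_distrib,
            Finset.sum_ite_eq' Finset.univ v (fun _ => (B' f u)^2)]
          simp
        rw [Finset.sum_congr rfl h2, Finset.sum_add_distrib, h1]
        ring
      have hAcard : (A.card : ℝ) = (A'.card : ℝ) + 1 := by
        have hpos : 1 ≤ A.card := Finset.card_pos.mpr ⟨v, hvA⟩
        rw [hA'def, Finset.card_erase_of_mem hvA]
        have : A.card - 1 + 1 = A.card := Nat.sub_add_cancel hpos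
        exact_mod_cast congrArg (Nat.cast : ℕ → ℝ) this.symm
      rw [hsplit]
      rw [hAcard]
      linarith [IH, hTb, htri]
    · push_neg at hleaf
      have h2 : ∀ v ∈ A, deg S v = 2 := by
        have hge : ∀ v ∈ A, 2 ≤ deg S v := by
          intro v hv
          have := deg_pos hs hv
          have := hleaf v hv
          omega
        have hsum : ∑ v ∈ A, (2 : ℕ) = ∑ v ∈ A, deg S v := by
          rw [handshake hs, hs.cardeq, Finset.sum_const, smul_eq_mul, mul_comm]
        intro v hv
        exact ((Finset.sum_eq_sum_iff_of_le hge).mp hsum v hv).symm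
      exact noleaf_case hs h2

lemma card_sub {β : Type*} [DecidableEq β] (S : Finset β) (p : β → Prop) :
    (Finset.univ.filter (fun e : {x // x ∈ S} => p e.1)).card = (S.filter p).card := by
  refine Finset.card_bij (fun e _ => e.1) ?_ ?_ ?_
  · intro e he
    exact Finset.mem_filter.mpr ⟨e.2, (Finset.mem_filter.mp he).2⟩
  · intro e1 _ e2 _ h
    exact Subtype.ext h
  · intro e he
    obtain ⟨heS, hep⟩ := Finset.mem_filter.mp he
    exact ⟨⟨e, heS⟩, Finset.mem_filter.mpr ⟨Finset.mem_univ _, hep⟩, rfl⟩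

lemma T_eq_three_t (S : Finset (Sym2 α)) :
    T S = 3 * Nat.card {c : (GG S).ConnectedComponent //
      Nat.card {v : α // (GG S).connectedComponentMk v = c} = 3 ∧
      Nat.card {e : {e // e ∈ S} // ∀ u ∈ (e.1 : Sym2 α),
        (GG S).connectedComponentMk u = c} = 3} := by
  set Q : (GG S).ConnectedComponent → Prop := fun c =>
    Nat.card {v : α // (GG S).connectedComponentMk v = c} = 3 ∧
    Nat.card {e : {e // e ∈ S} // ∀ u ∈ (e.1 : Sym2 α),
      (GG S).connectedComponentMk u = c} = 3 with hQ
  have hvfib : ∀ c : (GG S).ConnectedComponent,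
      Nat.card {v : α // (GG S).connectedComponentMk v = c}
      = (Finset.univ.filter (fun v => (GG S).connectedComponentMk v = c)).card := by
    intro c
    rw [Nat.card_eq_fintype_card, Fintype.card_subtype]
  have hvKv : ∀ x : α,
      Finset.univ.filter (fun v => (GG S).connectedComponentMk v
        = (GG S).connectedComponentMk x) = Kv S x := by
    intro x
    ext y
    simp only [Finset.mem_filter, Finset.mem_univ, true_and, mem_Kv,
      SimpleGraph.ConnectedComponent.eq]
    exact ⟨fun h => h.symm, fun h => h.symm⟩
  have hefib : ∀ x : α,
      Nat.card {e : {e // e ∈ S} // ∀ u ∈ (e.1 : Sym2 α),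
        (GG S).connectedComponentMk u = (GG S).connectedComponentMk x}
      = (Ke S x).card := by
    intro x
    rw [Nat.card_eq_fintype_card, Fintype.card_subtype]
    refine Finset.card_bij (fun e _ => e.1) ?_ ?_ ?_
    · intro e he
      have hp := (Finset.mem_filter.mp he).2
      rw [Ke]
      refine Finset.mem_filter.mpr ⟨e.2, fun u hu => ?_⟩
      exact ((SimpleGraph.ConnectedComponent.eq).mp (hp u hu)).symm
    · intro e1 _ e2 _ h
      exact Subtype.ext h
    · intro f hf
      rw [Ke, Finset.mem_filter] at hf
      obtain ⟨hfS, hfp⟩ := hf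
      refine ⟨⟨f, hfS⟩, Finset.mem_filter.mpr ⟨Finset.mem_univ _, fun u hu => ?_⟩, rfl⟩
      exact (SimpleGraph.ConnectedComponent.eq).mpr (hfp u hu).symm
  have hPQ : ∀ x : α, P S x ↔ Q ((GG S).connectedComponentMk x) := by
    intro x
    constructor
    · rintro ⟨h1', h2'⟩
      exact ⟨by rw [hvfib, hvKv]; exact h1', by rw [hefib x]; exact h2'⟩
    · rintro ⟨h1', h2'⟩
      rw [hvfib, hvKv] at h1'
      rw [hefib x] at h2'
      exact ⟨h1', h2'⟩
  have hfib : ∀ x ∈ Finset.univ.filter (P S),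
      (GG S).connectedComponentMk x ∈ Finset.univ.filter Q := by
    intro x hx
    exact Finset.mem_filter.mpr ⟨Finset.mem_univ _,
      (hPQ x).mp (Finset.mem_filter.mp hx).2⟩
  have hT := Finset.card_eq_sum_card_fiberwise hfib
  have hper : ∀ c ∈ Finset.univ.filter Q,
      ((Finset.univ.filter (P S)).filter
        (fun x => (GG S).connectedComponentMk x = c)).card = 3 := by
    intro c hc
    have hQc : Q c := (Finset.mem_filter.mp hc).2
    have heq : (Finset.univ.filter (P S)).filter
        (fun x => (GG S).connectedComponentMk x = c)
        = Finset.univ.filter (fun x => (GG S).connectedComponentMk x = c) := by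
      ext x
      simp only [Finset.mem_filter, Finset.mem_univ, true_and]
      constructor
      · rintro ⟨-, h2⟩
        exact h2
      · intro h2
        exact ⟨(hPQ x).mpr (h2 ▸ hQc), h2⟩
    rw [heq]
    induction c using SimpleGraph.ConnectedComponent.ind with
    | _ z =>
      rw [← hvfib]
      exact hQc.1
  rw [T, hT, Finset.sum_congr rfl hper, Finset.sum_const, smul_eq_mul, mul_comm]
  congr 1
  rw [Nat.card_eq_fintype_card, Fintype.card_subtype]

end TrIneq

open TrIneq in
/-- Let `G = ([d], S)` with `|S| = d` have invertible unsigned incidence matrix `V_S`,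
and suppose `t` of its connected components are triangles (components with 3 vertices
and 3 edges). Then `tr((V_S V_Sᵀ)⁻¹) ≥ d - 3t/4`. -/
theorem trace_inverse_lower_bound (d t : ℕ) (S : Finset (Sym2 (Fin d)))
    (hcard : S.card = d) (hdiag : ∀ e ∈ S, ¬ e.IsDiag)
    (VS : Matrix (Fin d) {e // e ∈ S} ℝ)
    (hVS : VS = Matrix.of fun i e => if i ∈ (e.1 : Sym2 (Fin d)) then (1 : ℝ) else 0)
    (hdet : IsUnit (VS * VSᵀ).det)
    (ht : t = Nat.card {c : (SimpleGraph.fromEdgeSet (↑S : Set (Sym2 (Fin d)))).ConnectedComponent //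
      Nat.card {v : Fin d //
        (SimpleGraph.fromEdgeSet (↑S : Set (Sym2 (Fin d)))).connectedComponentMk v = c} = 3 ∧
      Nat.card {e : {e // e ∈ S} // ∀ u ∈ (e.1 : Sym2 (Fin d)),
        (SimpleGraph.fromEdgeSet (↑S : Set (Sym2 (Fin d)))).connectedComponentMk u = c} = 3}) :
    (d : ℝ) - 3 * (t : ℝ) / 4 ≤ Matrix.trace ((VS * VSᵀ)⁻¹) := by
  classical
  have hA0 : (VS * VSᵀ) * (VS * VSᵀ)⁻¹ = 1 := Matrix.mul_nonsing_inv _ hdet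
  set Bm : Matrix {e // e ∈ S} (Fin d) ℝ := VSᵀ * (VS * VSᵀ)⁻¹ with hBm
  have hVB : VS * Bm = 1 := by
    rw [hBm, ← Matrix.mul_assoc]
    exact hA0
  have hcardeq : Fintype.card (Fin d) = Fintype.card {e // e ∈ S} := by
    rw [Fintype.card_fin, Fintype.card_coe, hcard]
  have hBV : Bm * VS = 1 :=
    (Matrix.mul_eq_one_comm_of_equiv (Fintype.equivOfCardEq hcardeq)).mp hVB
  have hsymA : ((VS * VSᵀ)⁻¹)ᵀ = (VS * VSᵀ)⁻¹ := by
    rw [Matrix.transpose_nonsing_inv]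
    congr 1
    rw [Matrix.transpose_mul, Matrix.transpose_transpose]
  have hkey : (VS * VSᵀ)⁻¹ = Bmᵀ * Bm := by
    have hBmT : Bmᵀ = (VS * VSᵀ)⁻¹ * VS := by
      rw [hBm, Matrix.transpose_mul, Matrix.transpose_transpose, hsymA]
    calc (VS * VSᵀ)⁻¹
        = (VS * VSᵀ)⁻¹ * ((VS * VSᵀ) * (VS * VSᵀ)⁻¹) := by rw [hA0, Matrix.mul_one]
      _ = ((VS * VSᵀ)⁻¹ * VS) * (VSᵀ * (VS * VSᵀ)⁻¹) := by
          rw [← Matrix.mul_assoc, ← Matrix.mul_assoc, Matrix.mul_assoc ((VS * VSᵀ)⁻¹ * VS)]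
      _ = Bmᵀ * Bm := by rw [hBmT, hBm]
  have htrace : Matrix.trace ((VS * VSᵀ)⁻¹) = ∑ f : {e // e ∈ S}, ∑ i, (Bm f i)^2 := by
    rw [hkey, Matrix.trace]
    have hdg : ∀ i, (Bmᵀ * Bm).diag i = ∑ f : {e // e ∈ S}, (Bm f i)^2 := by
      intro i
      rw [Matrix.diag_apply, Matrix.mul_apply]
      refine Finset.sum_congr rfl fun f _ => ?_
      rw [Matrix.transpose_apply, sq]
    rw [Finset.sum_congr rfl (fun i _ => hdg i), Finset.sum_comm]
  set Btot : Sym2 (Fin d) → Fin d → ℝ :=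
    fun f i => if h : f ∈ S then Bm ⟨f, h⟩ i else 0 with hBtot
  have hsys : Sys Finset.univ S Btot := by
    refine ⟨hdiag, fun _ _ x _ => Finset.mem_univ x, ?_, ?_, ?_, ?_⟩
    · rw [Finset.card_univ, Fintype.card_fin, hcard]
    · intro f hf g hg
      have entry := congrFun (congrFun hBV ⟨f, hf⟩) ⟨g, hg⟩
      rw [Matrix.mul_apply] at entry
      have hL : ∑ i, Bm ⟨f, hf⟩ i * VS i ⟨g, hg⟩ = es (Btot f) g := by
        rw [es, Finset.sum_filter]
        refine Finset.sum_congr rfl fun i _ => ?_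
        rw [hVS]
        simp only [Matrix.of_apply]
        by_cases hig : i ∈ g
        · rw [if_pos hig, if_pos hig, mul_one, hBtot]
          simp only [dif_pos hf]
        · rw [if_neg hig, if_neg hig, mul_zero]
      rw [hL] at entry
      rw [entry, Matrix.one_apply]
      by_cases hfg : f = g
      · subst hfg
        rw [if_pos rfl, if_pos rfl]
      · rw [if_neg (fun hh => hfg (Subtype.mk_eq_mk.mp hh)), if_neg hfg]
    · intro j _ i
      have entry := congrFun (congrFun hVB j) i
      rw [Matrix.mul_apply] at entry
      have hL : ∑ f : {e // e ∈ S}, VS j f * Bm f i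
          = ∑ f ∈ S.filter (fun f => j ∈ f), Btot f i := by
        rw [Finset.sum_filter]
        rw [← Finset.sum_coe_sort S (fun f => if j ∈ f then Btot f i else 0)]
        refine Finset.sum_congr rfl fun f _ => ?_
        rw [hVS]
        simp only [Matrix.of_apply]
        by_cases hjf : j ∈ (f : Sym2 (Fin d))
        · rw [if_pos hjf, if_pos hjf, one_mul, hBtot]
          simp only [dif_pos f.2, Subtype.coe_eta]
        · rw [if_neg hjf, if_neg hjf, zero_mul]
      rw [hL] at entry
      rw [entry, Matrix.one_apply]
    · intro f _ i hi
      exact absurd (Finset.mem_univ i) hi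
  have hmain := main_ineq d Finset.univ S Btot
    (by rw [Finset.card_univ, Fintype.card_fin]) hsys
  have hsum_eq : ∑ f ∈ S, ∑ i, (Btot f i)^2 = ∑ f : {e // e ∈ S}, ∑ i, (Bm f i)^2 := by
    rw [← Finset.sum_coe_sort S (fun f => ∑ i, (Btot f i)^2)]
    refine Finset.sum_congr rfl fun f _ => Finset.sum_congr rfl fun i _ => ?_
    rw [hBtot]
    simp only [dif_pos f.2, Subtype.coe_eta]
  have hTt : T S = 3 * t := by
    rw [ht]
    exact T_eq_three_t S
  rw [htrace, ← hsum_eq]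
  calc (d : ℝ) - 3 * (t : ℝ) / 4
      = ((Finset.univ : Finset (Fin d)).card : ℝ) - (T S : ℝ) / 4 := by
        rw [Finset.card_univ, Fintype.card_fin, hTt]
        push_cast
        ring
    _ ≤ ∑ f ∈ S, ∑ i, (Btot f i)^2 := hmain
end

section
/- For the A-optimal design instance in ℝ^d with vectors v₁ = … = v_{d−1} = N·eᵢ (i = 1,…,d−1) and v_d = e_d, each repeatable, as N → ∞ the ratio of the optimal integral value over k chosen vectors (with repetition) to the optimal fractional value tends to k/(k−d+1); in particular, for fixed N the integral optimum equals (d−1)/N + 1/(k−d+1) when one copy of each N·eᵢ and k−d+1 copies of e_d are chosen, and this choice is optimal among integral solutions. -/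
open Finset Matrix Filter

/-- The `i`-th vector of the integrality-gap instance: `√N·eᵢ` for `i < d-1`
(so that `vᵢvᵢᵀ = N·eᵢeᵢᵀ`, the `N·eᵢ` scaling convention), and `e_{d}` for the
last index. -/
noncomputable def gapVec (d : ℕ) (N : ℝ) (i : Fin d) : Fin d → ℝ :=
  if (i : ℕ) < d - 1 then (fun j => if j = i then Real.sqrt N else 0)
  else fun j => if j = i then 1 else 0

/-- The information matrix `Σᵢ yᵢ vᵢvᵢᵀ` of the instance. -/
noncomputable def gapMat (d : ℕ) (N : ℝ) (y : Fin d → ℝ) : Matrix (Fin d) (Fin d) ℝ :=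
  ∑ i : Fin d, y i • Matrix.vecMulVec (gapVec d N i) (gapVec d N i)

/-- The optimal integral value over `k` chosen vectors with repetition. -/
noncomputable def gapIntOpt (d k : ℕ) (N : ℝ) : ℝ :=
  sInf {r : ℝ | ∃ y : Fin d → ℕ, (∀ i, 1 ≤ y i) ∧ (∑ i, y i) = k ∧
    r = Matrix.trace ((gapMat d N (fun i => (y i : ℝ)))⁻¹)}

/-- The optimal fractional value. -/
noncomputable def gapFracOpt (d k : ℕ) (N : ℝ) : ℝ :=
  sInf {r : ℝ | ∃ x : Fin d → ℝ, (∀ i, 0 < x i) ∧ (∑ i, x i) = k ∧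
    r = Matrix.trace ((gapMat d N x)⁻¹)}

lemma gapVec_apply (d : ℕ) (N : ℝ) (i j : Fin d) :
    gapVec d N i j = if j = i then (if (i:ℕ) < d - 1 then Real.sqrt N else 1) else 0 := by
  by_cases h : (i:ℕ) < d - 1 <;> simp [gapVec, h]

lemma gapMat_diag (d : ℕ) {N : ℝ} (hN : 0 ≤ N) (y : Fin d → ℝ) :
    gapMat d N y = Matrix.diagonal (fun i => y i * (if (i:ℕ) < d - 1 then N else 1)) := by
  ext j l
  simp only [gapMat, Matrix.sum_apply, Matrix.smul_apply, Matrix.vecMulVec_apply,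
    smul_eq_mul, gapVec_apply, Matrix.diagonal_apply]
  rw [Finset.sum_eq_single j]
  · by_cases hjl : j = l
    · subst hjl
      by_cases h : (j:ℕ) < d - 1 <;> simp [h, Real.mul_self_sqrt hN]
    · simp [hjl, Ne.symm hjl]
  · intro i _ hij
    simp [Ne.symm hij]
  · simp

lemma ring_inverse_pi {d : ℕ} {v : Fin d → ℝ} (hv : ∀ i, v i ≠ 0) :
    Ring.inverse v = fun i => (v i)⁻¹ :=
  Ring.inverse_unit ⟨v, fun i => (v i)⁻¹, funext fun i => mul_inv_cancel₀ (hv i),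
    funext fun i => inv_mul_cancel₀ (hv i)⟩

lemma trace_inv_gapMat (d : ℕ) {N : ℝ} (hN : 0 < N) {y : Fin d → ℝ} (hy : ∀ i, y i ≠ 0) :
    Matrix.trace ((gapMat d N y)⁻¹)
      = ∑ i : Fin d, (y i * (if (i:ℕ) < d - 1 then N else 1))⁻¹ := by
  rw [gapMat_diag d hN.le y, Matrix.inv_diagonal, Matrix.trace_diagonal,
    ring_inverse_pi (fun i => ?_)]
  exact mul_ne_zero (hy i) (by by_cases h : (i:ℕ) < d - 1 <;> simp [h, hN.ne'])

lemma sum_ite_fin' {M : Type*} [AddCommMonoid M] (m : ℕ) (a b : M) :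
    ∑ i : Fin (m+1), (if (i:ℕ) < m then a else b) = m • a + b := by
  rw [Fin.sum_univ_eq_sum_range (fun j => if j < m then a else b) (m+1),
    Finset.sum_range_succ, if_neg (lt_irrefl m),
    Finset.sum_congr rfl (fun j hj => if_pos (Finset.mem_range.mp hj)),
    Finset.sum_const, Finset.card_range]

lemma sum_ite_fin (m : ℕ) (a b : ℝ) :
    ∑ i : Fin (m+1), (if (i:ℕ) < m then a else b) = m * a + b := by
  rw [sum_ite_fin', nsmul_eq_mul]

/-- value of the canonical integral solution -/
lemma canon_val (m k : ℕ) (hk : m + 1 ≤ k) {N : ℝ} (hN : 0 < N) :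
    Matrix.trace ((gapMat (m+1) N
        (fun i => if (i:ℕ) < m then (1:ℝ) else ((k - m : ℕ) : ℝ)))⁻¹)
      = (m:ℝ) / N + ((k:ℝ) - m)⁻¹ := by
  have hkm : (1:ℕ) ≤ k - m := by omega
  have hy : ∀ i : Fin (m+1), (if (i:ℕ) < m then (1:ℝ) else ((k - m : ℕ) : ℝ)) ≠ 0 := by
    intro i; by_cases h : (i:ℕ) < m <;> simp [h]; omega
  rw [trace_inv_gapMat _ hN hy]
  simp only [Nat.add_sub_cancel]
  rw [Finset.sum_congr rfl (g := fun i : Fin (m+1) =>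
      if (i:ℕ) < m then N⁻¹ else (((k - m : ℕ):ℝ))⁻¹)
      (fun i _ => by by_cases h : (i:ℕ) < m <;> simp [h]),
    sum_ite_fin]
  rw [Nat.cast_sub (by omega)]
  ring

/-- lower bound for arbitrary integral solutions, for large N -/
lemma int_lb (m k : ℕ) (hk : m + 1 ≤ k) {N : ℝ} (hN : ((m:ℝ) * k * k + 1) ≤ N)
    (y : Fin (m+1) → ℕ) (h1 : ∀ i, 1 ≤ y i) (hs : ∑ i, y i = k) :
    (m:ℝ) / N + ((k:ℝ) - m)⁻¹ ≤ Matrix.trace ((gapMat (m+1) N (fun i => (y i : ℝ)))⁻¹) := by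
  have hN0 : (0:ℝ) < N := lt_of_lt_of_le (by positivity) hN
  set L : Fin (m+1) := Fin.last m with hL
  have hLm : (L : ℕ) = m := rfl
  have hSsum : (∑ i ∈ Finset.univ.erase L, y i) + y L = k := by
    rw [Finset.sum_erase_add _ _ (Finset.mem_univ L)]; exact hs
  have hcard : (Finset.univ.erase L).card = m := by
    rw [Finset.card_erase_of_mem (Finset.mem_univ L), Finset.card_univ, Fintype.card_fin]
    omega
  have hmS : m ≤ ∑ i ∈ Finset.univ.erase L, y i := by
    calc m = (Finset.univ.erase L).card • 1 := by rw [hcard, smul_eq_mul, mul_one]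
    _ ≤ _ := Finset.card_nsmul_le_sum _ _ _ (fun i _ => h1 i)
  by_cases hcase : y L = k - m
  · -- canonical solution
    have hall : ∀ i ∈ Finset.univ.erase L, y i = 1 := by
      by_contra hc
      push_neg at hc
      obtain ⟨j, hj, hne⟩ := hc
      have h2 : 2 ≤ y j := by have := h1 j; omega
      have := Finset.sum_lt_sum (f := fun _ => 1) (g := y)
        (fun i _ => h1 i) ⟨j, hj, by show 1 < y j; omega⟩
      rw [Finset.sum_const, hcard, smul_eq_mul, mul_one] at this
      omega
    have hfun : (fun i => ((y i : ℕ) : ℝ)) =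
        (fun i : Fin (m+1) => if (i:ℕ) < m then (1:ℝ) else ((k - m : ℕ) : ℝ)) := by
      funext i
      by_cases h : (i:ℕ) < m
      · have hiL : i ≠ L := by
          intro hEq; rw [hEq, hLm] at h; omega
        rw [if_pos h, hall i (Finset.mem_erase.mpr ⟨hiL, Finset.mem_univ i⟩), Nat.cast_one]
      · have hiL : i = L := by
          apply Fin.ext; have := i.isLt; omega
        rw [if_neg h, hiL, hcase]
    rw [hfun, canon_val m k hk hN0]
  · -- y L ≤ k - m - 1
    have hyL : y L ≤ k - m - 1 := by omega
    have hk2 : m + 2 ≤ k := by have := h1 L; omega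
    have hyR : ∀ i : Fin (m+1), ((y i : ℕ) : ℝ) ≠ 0 := by
      intro i; have := h1 i; positivity
    rw [trace_inv_gapMat _ hN0 hyR]
    simp only [Nat.add_sub_cancel]
    have hterm : ∀ i ∈ (Finset.univ : Finset (Fin (m+1))),
        (0:ℝ) ≤ ((y i : ℝ) * if (i:ℕ) < m then N else 1)⁻¹ := by
      intro i _
      by_cases h : (i:ℕ) < m <;> simp [h] <;> positivity
    have hge : ((y L : ℝ) * if (L:ℕ) < m then N else 1)⁻¹ ≤
        ∑ i : Fin (m+1), ((y i : ℝ) * if (i:ℕ) < m then N else 1)⁻¹ :=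
      Finset.single_le_sum hterm (Finset.mem_univ L)
    rw [hLm, if_neg (lt_irrefl m), mul_one] at hge
    refine le_trans ?_ hge
    -- m/N + 1/(k-m) ≤ 1/(y L) using y L ≤ k-m-1
    have hyL0 : (0:ℝ) < (y L : ℝ) := by have := h1 L; positivity
    have hstep : (((k - m - 1 : ℕ) : ℝ))⁻¹ ≤ ((y L : ℝ))⁻¹ := by
      apply inv_anti₀ hyL0
      exact_mod_cast hyL
    refine le_trans ?_ hstep
    have hA : (((k - m - 1 : ℕ)) : ℝ) = (k:ℝ) - m - 1 := by
      rw [Nat.cast_sub (by omega : 1 ≤ k - m), Nat.cast_sub (by omega : m ≤ k), Nat.cast_one]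
    rw [hA]
    set A : ℝ := (k:ℝ) - m with hAdef
    have hmk2 : (m:ℝ) + 2 ≤ (k:ℝ) := by exact_mod_cast hk2
    have hA2 : (2:ℝ) ≤ A := by rw [hAdef]; linarith
    have hAk : A ≤ (k:ℝ) := by
      have : (0:ℝ) ≤ m := Nat.cast_nonneg m
      rw [hAdef]; linarith
    have hA1k : A - 1 ≤ (k:ℝ) := by linarith
    have hA0 : (0:ℝ) < A := by linarith
    have hA10 : (0:ℝ) < A - 1 := by linarith
    rw [inv_eq_one_div A, inv_eq_one_div (A-1), div_add_div _ _ hN0.ne' hA0.ne',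
      div_le_div_iff₀ (by positivity) hA10]
    have hAA : A * (A - 1) ≤ (k:ℝ) * k :=
      mul_le_mul hAk hA1k (by linarith) (by positivity)
    have hm0 : (0:ℝ) ≤ m := Nat.cast_nonneg m
    have : (m:ℝ) * (A * (A-1)) ≤ (m:ℝ) * ((k:ℝ) * k) :=
      mul_le_mul_of_nonneg_left hAA hm0
    nlinarith [this, hN]

lemma int_opt (m k : ℕ) (hk : m + 1 ≤ k) {N : ℝ} (hN : ((m:ℝ) * k * k + 1) ≤ N) :
    gapIntOpt (m+1) k N = (m:ℝ) / N + ((k:ℝ) - m)⁻¹ := by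
  have hN0 : (0:ℝ) < N := lt_of_lt_of_le (by positivity) hN
  apply IsLeast.csInf_eq
  constructor
  · refine ⟨fun i => if (i:ℕ) < m then 1 else k - m, ?_, ?_, ?_⟩
    · intro i; by_cases h : (i:ℕ) < m <;> simp [h] <;> omega
    · rw [sum_ite_fin' m 1 (k - m), smul_eq_mul, mul_one]; omega
    · have : (fun i : Fin (m+1) => ((if (i:ℕ) < m then 1 else k - m : ℕ) : ℝ)) =
          (fun i : Fin (m+1) => if (i:ℕ) < m then (1:ℝ) else ((k - m : ℕ) : ℝ)) := by
        funext i; by_cases h : (i:ℕ) < m <;> simp [h]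
      rw [this, canon_val m k hk hN0]
  · rintro r ⟨y, h1, hs, rfl⟩
    exact int_lb m k hk hN y h1 hs

lemma frac_opt (m k : ℕ) (hk : m + 1 ≤ k) {N : ℝ} (hN : 0 < N) :
    gapFracOpt (m+1) k N = ((m:ℝ) / Real.sqrt N + 1)^2 / k := by
  set s : ℝ := Real.sqrt N with hs
  have hs0 : 0 < s := Real.sqrt_pos.mpr hN
  have hss : s * s = N := Real.mul_self_sqrt hN.le
  have hkn : 0 < k := by omega
  have hk0 : (0:ℝ) < k := by exact_mod_cast hkn
  set S : ℝ := (m:ℝ) / s + 1 with hSdef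
  have hS0 : 0 < S := by positivity
  apply IsLeast.csInf_eq
  constructor
  · refine ⟨fun i => if (i:ℕ) < m then (k:ℝ) * s⁻¹ / S else (k:ℝ) / S, ?_, ?_, ?_⟩
    · intro i; by_cases h : (i:ℕ) < m <;> simp only [h, if_true, if_false] <;> positivity
    · rw [sum_ite_fin, hSdef]
      have hs' : s ≠ 0 := hs0.ne'
      field_simp
    · have hx : ∀ i : Fin (m+1),
          (if (i:ℕ) < m then (k:ℝ) * s⁻¹ / S else (k:ℝ) / S) ≠ 0 := by
        intro i; by_cases h : (i:ℕ) < m <;> simp only [h, if_true, if_false] <;> positivity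
      rw [trace_inv_gapMat _ hN hx]
      simp only [Nat.add_sub_cancel]
      rw [Finset.sum_congr rfl (g := fun i : Fin (m+1) =>
          if (i:ℕ) < m then S / ((k:ℝ) * s) else S / k) (fun i _ => ?_), sum_ite_fin]
      · rw [hSdef]; field_simp
      · by_cases h : (i:ℕ) < m <;> simp only [h, if_true, if_false]
        · rw [← hss]; field_simp
        · field_simp
  · rintro r ⟨x, hx, hsum, rfl⟩
    rw [trace_inv_gapMat _ hN (fun i => (hx i).ne')]
    simp only [Nat.add_sub_cancel]
    have key := Finset.sq_sum_div_le_sum_sq_div Finset.univ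
      (f := fun i : Fin (m+1) => if (i:ℕ) < m then s⁻¹ else 1) (g := x)
      (fun i _ => hx i)
    rw [hsum] at key
    have hf : ∑ i : Fin (m+1), (if (i:ℕ) < m then s⁻¹ else 1) = S := by
      rw [sum_ite_fin, hSdef]; ring
    rw [hf] at key
    refine le_trans (le_of_eq ?_) (le_trans key (le_of_eq ?_))
    · rfl
    · refine Finset.sum_congr rfl (fun i _ => ?_)
      by_cases h : (i:ℕ) < m <;> simp only [h, if_true, if_false]
      · rw [← hss]
        rw [mul_inv, sq, mul_inv]
        field_simp
      · rw [one_pow, mul_one, div_eq_inv_mul, mul_one]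

/-- For the A-optimal design instance with vectors `N·e₁,…,N·e_{d-1}, e_d` (each
repeatable): as `N → ∞` the ratio of the optimal integral value over `k` chosen
vectors (with repetition) to the optimal fractional value tends to `k/(k-d+1)`;
for fixed `N` the choice of one copy of each `N·eᵢ` and `k-d+1` copies of `e_d` has
objective `(d-1)/N + 1/(k-d+1)`, and (for all large enough `N`) this choice is
optimal among integral solutions. -/
theorem integrality_gap_A_optimal (d k : ℕ) (hd : 1 ≤ d) (hdk : d ≤ k) :
    Tendsto (fun N : ℝ => gapIntOpt d k N / gapFracOpt d k N) atTop
        (nhds ((k : ℝ) / ((k : ℝ) - d + 1))) ∧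
      (∀ N : ℝ, 0 < N →
        Matrix.trace ((gapMat d N
            (fun i => if (i : ℕ) < d - 1 then (1 : ℝ) else ((k - d + 1 : ℕ) : ℝ)))⁻¹)
          = ((d : ℝ) - 1) / N + 1 / ((k : ℝ) - d + 1)) ∧
      (∃ N₀ : ℝ, ∀ N : ℝ, N₀ ≤ N →
        ∀ y : Fin d → ℕ, (∀ i, 1 ≤ y i) → (∑ i, y i) = k →
          Matrix.trace ((gapMat d N
              (fun i => if (i : ℕ) < d - 1 then (1 : ℝ) else ((k - d + 1 : ℕ) : ℝ)))⁻¹)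
            ≤ Matrix.trace ((gapMat d N (fun i => (y i : ℝ)))⁻¹)) := by
  obtain ⟨m, rfl⟩ : ∃ m, d = m + 1 := ⟨d - 1, by omega⟩
  have hk : m + 1 ≤ k := hdk
  have hkm : k - (m+1) + 1 = k - m := by omega
  have hk0 : (0:ℝ) < k := by exact_mod_cast (by omega : 0 < k)
  have hkm0 : (0:ℝ) < (k:ℝ) - m := by
    have : (m:ℝ) + 1 ≤ k := by exact_mod_cast hk
    linarith
  refine ⟨?_, ?_, ?_⟩
  · -- the limit
    have hsqrt : Tendsto Real.sqrt atTop atTop :=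
      (tendsto_rpow_atTop (by norm_num : (0:ℝ) < 1/2)).congr
        (fun x => (Real.sqrt_eq_rpow x).symm)
    have h1 : Tendsto (fun N : ℝ => (m:ℝ)/N) atTop (nhds 0) :=
      tendsto_const_nhds.div_atTop tendsto_id
    have h2 : Tendsto (fun N : ℝ => (m:ℝ)/Real.sqrt N) atTop (nhds 0) :=
      tendsto_const_nhds.div_atTop hsqrt
    have hnum : Tendsto (fun N : ℝ => (m:ℝ)/N + ((k:ℝ)-m)⁻¹) atTop
        (nhds (0 + ((k:ℝ)-m)⁻¹)) := h1.add tendsto_const_nhds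
    have hden : Tendsto (fun N : ℝ => ((m:ℝ)/Real.sqrt N + 1)^2 / k) atTop
        (nhds (((0:ℝ)+1)^2 / (k:ℝ))) := ((h2.add tendsto_const_nhds).pow 2).div_const k
    have hG := hnum.div hden (by positivity)
    have hval : (0 + ((k:ℝ)-m)⁻¹)/((0+1)^2/(k:ℝ)) = (k:ℝ)/((k:ℝ) - ((m+1:ℕ):ℝ) + 1) := by
      rw [show (k:ℝ) - ((m+1:ℕ):ℝ) + 1 = (k:ℝ) - m by push_cast; ring, zero_add]
      norm_num
      field_simp
    rw [hval] at hG
    refine Tendsto.congr' ?_ hG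
    filter_upwards [eventually_ge_atTop ((m:ℝ)*k*k+1)] with N hN
    have hN0 : (0:ℝ) < N := lt_of_lt_of_le (by positivity) hN
    rw [Pi.div_apply, int_opt m k hk hN, frac_opt m k hk hN0]
  · -- the value of the canonical solution
    intro N hN
    simp only [Nat.add_sub_cancel, hkm]
    rw [canon_val m k hk hN]
    push_cast
    ring
  · -- optimality for large N
    refine ⟨(m:ℝ)*k*k+1, fun N hN y h1 hs => ?_⟩
    have hN0 : (0:ℝ) < N := lt_of_lt_of_le (by positivity) hN
    simp only [Nat.add_sub_cancel, hkm]
    rw [canon_val m k hk hN0]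
    exact int_lb m k hk hN y h1 hs
end
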